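/- In the calculus L_lcc, the open extension of applicative similarity coincides with contextual preorder: ≼_lcc^o = ≤_lcc. Consequently, applicative bisimilarity (mutual similarity) coincides with contextual equivalence ∼_lcc. -/

import Mathlib

/-! # Core syntax for the calculi L_lcc, L_name and LR

Following Schmidt-Schauß, Sabel, Machkasova,
"Simulation in the Call-by-Need Lambda-Calculus with Letrec, Case, Constructors, and Seq".

Expressions use de Bruijn indices.  A signature fixes the set of types, the data
constructors of each type together with their arities, and a distinguished type `Bool`
with the 0-ary constructors `True` and `False`. -/



structure Sig : Type 1 where
  TyName : Type
  CName : TyName → Type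
  deceq : ∀ T, DecidableEq (CName T)
  arity : ∀ T, CName T → ℕ
  boolTy : TyName
  trueC : CName boolTy
  falseC : CName boolTy
  true_arity : arity boolTy trueC = 0
  false_arity : arity boolTy falseC = 0
  true_ne_false : trueC ≠ falseC

variable (S : Sig)

/-- ℒ-expressions (de Bruijn): variables, applications, abstractions, fully saturated
constructor applications, `seq`, `case` (with exactly one alternative per constructor
of the scrutinized type; the alternative for `c` binds `arity c` variables), and
`letrec` with `n+1` mutually recursive bindings (so at least one binding); the
bindings and the body are under the `n+1` letrec binders.
The letrec-free expressions are the expressions of `L_lcc`. -/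
inductive Exp : Type where
  | var : ℕ → Exp
  | app : Exp → Exp → Exp
  | lam : Exp → Exp
  | constr : (T : S.TyName) → (c : S.CName T) → (Fin (S.arity T c) → Exp) → Exp
  | seqE : Exp → Exp → Exp
  | caseE : (T : S.TyName) → Exp → ((c : S.CName T) → Exp) → Exp
  | letrecE : (n : ℕ) → (Fin (n+1) → Exp) → Exp → Exp

namespace Core

variable {S}

/-- lift a renaming under `m` binders -/
def liftN (m : ℕ) (f : ℕ → ℕ) : ℕ → ℕ := fun k => if k < m then k else f (k - m) + m

/-- renaming of de Bruijn indices -/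
def rename (f : ℕ → ℕ) : Exp S → Exp S
  | .var k => .var (f k)
  | .app u v => .app (rename f u) (rename f v)
  | .lam u => .lam (rename (liftN 1 f) u)
  | .constr T c args => .constr T c (fun i => rename f (args i))
  | .seqE u v => .seqE (rename f u) (rename f v)
  | .caseE T e alts => .caseE T (rename f e) (fun c => rename (liftN (S.arity T c) f) (alts c))
  | .letrecE n b t => .letrecE n (fun i => rename (liftN (n+1) f) (b i)) (rename (liftN (n+1) f) t)

/-- lift a substitution under `m` binders -/
def upN (m : ℕ) (σ : ℕ → Exp S) : ℕ → Exp S :=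
  fun k => if k < m then .var k else rename (· + m) (σ (k - m))

/-- parallel substitution -/
def subst (σ : ℕ → Exp S) : Exp S → Exp S
  | .var k => σ k
  | .app u v => .app (subst σ u) (subst σ v)
  | .lam u => .lam (subst (upN 1 σ) u)
  | .constr T c args => .constr T c (fun i => subst σ (args i))
  | .seqE u v => .seqE (subst σ u) (subst σ v)
  | .caseE T e alts => .caseE T (subst σ e) (fun c => subst (upN (S.arity T c) σ) (alts c))
  | .letrecE n b t => .letrecE n (fun i => subst (upN (n+1) σ) (b i)) (subst (upN (n+1) σ) t)

/-- the substitution `[t/x0]` for the outermost binder -/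
def consSub (t : Exp S) : ℕ → Exp S
  | 0 => t
  | (k+1) => .var k

/-- the substitution replacing the `m` innermost binders by `args` -/
def instSub {m : ℕ} (args : Fin m → Exp S) : ℕ → Exp S :=
  fun k => if h : k < m then args ⟨k, h⟩ else .var (k - m)

/-- `closedUnder d e`: all free de Bruijn indices of `e` are `< d` -/
def closedUnder : ℕ → Exp S → Prop
  | d, .var k => k < d
  | d, .app u v => closedUnder d u ∧ closedUnder d v
  | d, .lam u => closedUnder (d+1) u
  | d, .constr _ _ args => ∀ i, closedUnder d (args i)
  | d, .seqE u v => closedUnder d u ∧ closedUnder d v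
  | d, .caseE T e alts => closedUnder d e ∧ ∀ c, closedUnder (d + S.arity T c) (alts c)
  | d, .letrecE n b t => (∀ i, closedUnder (d + (n+1)) (b i)) ∧ closedUnder (d + (n+1)) t

/-- a closed expression -/
def closed (e : Exp S) : Prop := closedUnder 0 e

/-- letrec-free expressions, i.e. the expressions of the calculus `L_lcc` -/
def lfree : Exp S → Prop
  | .var _ => True
  | .app u v => lfree u ∧ lfree v
  | .lam u => lfree u
  | .constr _ _ args => ∀ i, lfree (args i)
  | .seqE u v => lfree u ∧ lfree v
  | .caseE _ e alts => lfree e ∧ ∀ c, lfree (alts c)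
  | .letrecE _ _ _ => False

/-- values: abstractions and constructor applications -/
def isValue : Exp S → Prop
  | .lam _ => True
  | .constr _ _ _ => True
  | _ => False

/-- constructor applications -/
def isConstrApp (e : Exp S) : Prop := ∃ T c args, e = .constr T c args

/-- the diverging expression `Ω = (λz. z z) (λx. x x)` -/
def Omega : Exp S :=
  .app (.lam (.app (.var 0) (.var 0))) (.lam (.app (.var 0) (.var 0)))

/-- the constructor `True` (of the distinguished type `Bool`, arity 0) -/
def trueE : Exp S := .constr S.boolTy S.trueC (fun _ => .var 0)

/-- update the alternative for constructor `c0` -/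
def updAlt {T : S.TyName} (alts : (c : S.CName T) → Exp S) (c0 : S.CName T) (e : Exp S) :
    (c : S.CName T) → Exp S :=
  fun c => letI := S.deceq T; if c = c0 then e else alts c

end Core
namespace Core

variable {S : Sig}

/-! ## Contexts -/

/-- reduction contexts of `L_lcc` (and `A`-contexts of `L_name`):
`A ::= [·] | (A s) | (case_T A of alts) | (seq A s)` -/
inductive ACtx (S : Sig) : Type where
  | hole : ACtx S
  | appA : ACtx S → Exp S → ACtx S
  | seqA : ACtx S → Exp S → ACtx S
  | caseA : (T : S.TyName) → ACtx S → ((c : S.CName T) → Exp S) → ACtx S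

/-- plugging an expression into an `A`-context -/
def plugA : ACtx S → Exp S → Exp S
  | .hole, e => e
  | .appA A t, e => .app (plugA A e) t
  | .seqA A t, e => .seqE (plugA A e) t
  | .caseA T A alts, e => .caseE T (plugA A e) alts

/-- renaming an `A`-context (there are no binders above the hole) -/
def renameA (f : ℕ → ℕ) : ACtx S → ACtx S
  | .hole => .hole
  | .appA A t => .appA (renameA f A) (rename f t)
  | .seqA A t => .seqA (renameA f A) (rename f t)
  | .caseA T A alts => .caseA T (renameA f A) (fun c => rename (liftN (S.arity T c) f) (alts c))

/-- general (one-hole, possibly capturing) contexts over ℒ-expressions -/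
inductive Ctx (S : Sig) : Type where
  | hole : Ctx S
  | appL : Ctx S → Exp S → Ctx S
  | appR : Exp S → Ctx S → Ctx S
  | lamC : Ctx S → Ctx S
  | seqL : Ctx S → Exp S → Ctx S
  | seqR : Exp S → Ctx S → Ctx S
  | constrC : (T : S.TyName) → (c : S.CName T) → Fin (S.arity T c) →
      (Fin (S.arity T c) → Exp S) → Ctx S → Ctx S
  | caseScrut : (T : S.TyName) → Ctx S → ((c : S.CName T) → Exp S) → Ctx S
  | caseAlt : (T : S.TyName) → (c0 : S.CName T) → Exp S → ((c : S.CName T) → Exp S) →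
      Ctx S → Ctx S
  | letrecB : (n : ℕ) → Fin (n+1) → (Fin (n+1) → Exp S) → Ctx S → Exp S → Ctx S
  | letrecT : (n : ℕ) → (Fin (n+1) → Exp S) → Ctx S → Ctx S

/-- plugging (capture-permitting) into a general context -/
def plugC : Ctx S → Exp S → Exp S
  | .hole, e => e
  | .appL C t, e => .app (plugC C e) t
  | .appR t C, e => .app t (plugC C e)
  | .lamC C, e => .lam (plugC C e)
  | .seqL C t, e => .seqE (plugC C e) t
  | .seqR t C, e => .seqE t (plugC C e)
  | .constrC T c i args C, e => .constr T c (Function.update args i (plugC C e))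
  | .caseScrut T C alts, e => .caseE T (plugC C e) alts
  | .caseAlt T c0 scrut alts C, e => .caseE T scrut (updAlt alts c0 (plugC C e))
  | .letrecB n i b C t, e => .letrecE n (Function.update b i (plugC C e)) t
  | .letrecT n b C, e => .letrecE n b (plugC C e)

/-- number of binders above the hole of a context -/
def depthC : Ctx S → ℕ
  | .hole => 0
  | .appL C _ => depthC C
  | .appR _ C => depthC C
  | .lamC C => depthC C + 1
  | .seqL C _ => depthC C
  | .seqR _ C => depthC C
  | .constrC _ _ _ _ C => depthC C
  | .caseScrut _ C _ => depthC C
  | .caseAlt T c0 _ _ C => depthC C + S.arity T c0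
  | .letrecB n _ _ C _ => depthC C + (n+1)
  | .letrecT n _ C => depthC C + (n+1)

/-- letrec-free contexts, i.e. the contexts of `L_lcc` -/
def lfreeCtx : Ctx S → Prop
  | .hole => True
  | .appL C t => lfreeCtx C ∧ lfree t
  | .appR t C => lfree t ∧ lfreeCtx C
  | .lamC C => lfreeCtx C
  | .seqL C t => lfreeCtx C ∧ lfree t
  | .seqR t C => lfree t ∧ lfreeCtx C
  | .constrC _ _ _ args C => (∀ i, lfree (args i)) ∧ lfreeCtx C
  | .caseScrut _ C alts => lfreeCtx C ∧ ∀ c, lfree (alts c)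
  | .caseAlt _ _ scrut alts C => lfree scrut ∧ (∀ c, lfree (alts c)) ∧ lfreeCtx C
  | .letrecB _ _ _ _ _ => False
  | .letrecT _ _ _ => False

/-! ## The calculus `L_lcc` -/

/-- the basic reduction rules (nbeta), (nseq), (ncase) of `L_lcc` -/
inductive LccBase : Exp S → Exp S → Prop where
  | nbeta {u t} : LccBase (.app (.lam u) t) (subst (consSub t) u)
  | nseq {v t} : isValue v → LccBase (.seqE v t) t
  | ncase {T c args alts} :
      LccBase (.caseE T (.constr T c args) alts) (subst (instSub args) (alts c))

/-- normal-order reduction of `L_lcc`: a basic rule inside a reduction context -/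
def lccStep (s t : Exp S) : Prop :=
  ∃ (A : ACtx S) (r r' : Exp S), LccBase r r' ∧ s = plugA A r ∧ t = plugA A r'

/-- `s` reduces in finitely many normal-order steps to the value `v` -/
def lccConvTo (s v : Exp S) : Prop := Relation.ReflTransGen lccStep s v ∧ isValue v

/-- convergence in `L_lcc` -/
def lccConv (s : Exp S) : Prop := ∃ v, lccConvTo s v

/-- contextual preorder of `L_lcc` (quantifying over the letrec-free contexts) -/
def leLcc (s t : Exp S) : Prop :=
  ∀ C : Ctx S, lfreeCtx C → lccConv (plugC C s) → lccConv (plugC C t)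

/-- contextual equivalence of `L_lcc` -/
def eqLcc (s t : Exp S) : Prop := leLcc s t ∧ leLcc t s

/-- open extension of a relation, w.r.t. closing `L_lcc`-substitutions -/
def openL (η : Exp S → Exp S → Prop) (s t : Exp S) : Prop :=
  ∀ σ : ℕ → Exp S, (∀ k, lfree (σ k)) →
    closed (subst σ s) → closed (subst σ t) → η (subst σ s) (subst σ t)

/-- `cBot`: expressions all of whose closing `L_lcc`-instances diverge -/
def cBot (s : Exp S) : Prop :=
  ∀ σ : ℕ → Exp S, (∀ k, lfree (σ k)) → closed (subst σ s) → ¬ lccConv (subst σ s)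

/-- greatest fixpoint of a (monotone) operator on relations:
the union of all post-fixed points -/
def gfpRel {α : Type*} (F : (α → α → Prop) → (α → α → Prop)) (a b : α) : Prop :=
  ∃ η, (∀ x y, η x y → F η x y) ∧ η a b

/-- the operator `F_lcc` for applicative similarity in `L_lcc` -/
def Flcc (η : Exp S → Exp S → Prop) (s t : Exp S) : Prop :=
  (∀ s', lccConvTo s (.lam s') →
      ((∃ t', lccConvTo t (.lam t') ∧ openL η s' t') ∨
       (∃ T c targs, lccConvTo t (.constr T c targs) ∧ cBot s'))) ∧
  (∀ T c args, lccConvTo s (.constr T c args) →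
      ∃ targs, lccConvTo t (.constr T c targs) ∧ ∀ i, η (args i) (targs i))

/-- applicative similarity `≼_lcc` in `L_lcc` -/
def simLcc : Exp S → Exp S → Prop := gfpRel Flcc

end Core
namespace Core

variable {S : Sig}

/-! ## The test contexts `Q_lcc` and `Q_CE` -/

/-- the context `case_T [·] of … ((c x1 … x_ar) → x_i) …`, all other alternatives `Ω` -/
def caseSelCtx (T : S.TyName) (c : S.CName T) (i : Fin (S.arity T c)) : Exp S → Exp S :=
  fun e => .caseE T e (fun c' => letI := S.deceq T; if c' = c then .var i else Omega)

/-- the context `case_T [·] of … ((c x1 … x_ar) → True) …`, all other alternatives `Ω` -/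
def caseTrueCtx (T : S.TyName) (c : S.CName T) : Exp S → Exp S :=
  fun e => .caseE T e (fun c' => letI := S.deceq T; if c' = c then trueE else Omega)

/-- the set `Q_lcc`: application to a closed `L_lcc`-expression, the selector case
contexts, and the `True` case contexts -/
def Qlcc (S : Sig) : Set (Exp S → Exp S) :=
  {f | (∃ r : Exp S, lfree r ∧ closed r ∧ f = fun e => .app e r) ∨
       (∃ T c i, f = caseSelCtx T c i) ∨
       (∃ T c, f = caseTrueCtx T c)}

/-- the set `CE_lcc` of closed letrec-free expressions generated by
`r ::= Ω | λx.s | (c r1 … r_ar)` -/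
inductive CE : Exp S → Prop where
  | omega : CE Omega
  | abs {u : Exp S} : lfree (Exp.lam u) → closed (Exp.lam u) → CE (.lam u)
  | constrI {T c} {args : Fin (S.arity T c) → Exp S} :
      (∀ i, CE (args i)) → CE (.constr T c args)

/-- the set `Q_CE`: like `Q_lcc`, but the arguments in application contexts are
restricted to `CE_lcc` -/
def QCE (S : Sig) : Set (Exp S → Exp S) :=
  {f | (∃ r : Exp S, CE r ∧ f = fun e => .app e r) ∨
       (∃ T c i, f = caseSelCtx T c i) ∨
       (∃ T c, f = caseTrueCtx T c)}

/-- `Q1 (Q2 (… (Qn s)))` -/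
def applyAll (l : List (Exp S → Exp S)) (s : Exp S) : Exp S := l.foldr (fun f e => f e) s

/-! ### `Q`-similarity and the inductive `Q`-preorder in `L_lcc` -/

/-- the `Q`-experiment operator for `L_lcc`, instantiated with a set `𝒬` of contexts -/
def FQlcc (𝒬 : Set (Exp S → Exp S)) (η : Exp S → Exp S → Prop) (s t : Exp S) : Prop :=
  ∀ v1, lccConvTo s v1 → ∃ v2, lccConvTo t v2 ∧ ∀ f ∈ 𝒬, η (f v1) (f v2)

/-- `𝒬`-similarity in `L_lcc` -/
def simQlcc (𝒬 : Set (Exp S → Exp S)) : Exp S → Exp S → Prop := gfpRel (FQlcc 𝒬)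

/-- the inductively defined preorder `≤_{lcc,𝒬}` -/
def leQlcc (𝒬 : Set (Exp S → Exp S)) (s t : Exp S) : Prop :=
  ∀ l : List (Exp S → Exp S), (∀ f ∈ l, f ∈ 𝒬) →
    lccConv (applyAll l s) → lccConv (applyAll l t)

end Core
namespace Core

variable {S : Sig}

/-! ## The call-by-need calculus `LR` -/

/-- variable-to-variable binding chains in a letrec environment -/
inductive derefChain {n : ℕ} (b : Fin (n+1) → Exp S) : Fin (n+1) → Fin (n+1) → Prop where
  | refl (i) : derefChain b i i
  | step {i j k : Fin (n+1)} : b i = .var (j : ℕ) → derefChain b j k → derefChain b i k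

/-- `Needed b body i`: binding `i` is visited by the labeling algorithm (its value is
needed), starting from the body of the top-level letrec -/
inductive Needed {n : ℕ} (b : Fin (n+1) → Exp S) (body : Exp S) : Fin (n+1) → Prop where
  | ofBody {A : ACtx S} {i : Fin (n+1)} : body = plugA A (.var (i : ℕ)) → Needed b body i
  | ofBind {k} {A : ACtx S} {i : Fin (n+1)} :
      Needed b body k → b k = plugA A (.var (i : ℕ)) → Needed b body i

/-- renaming used when merging letrec environments: the outer part
(`N` outer bindings, `M` inner bindings) -/
def rhoOut (N M : ℕ) : ℕ → ℕ := fun k => if k < N then k else k + M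

/-- renaming used when merging letrec environments: the inner part -/
def rhoIn (N M : ℕ) : ℕ → ℕ :=
  fun k => if k < M then k + N else if k < M + N then k - M else k

/-- merged environment of `(llet-in)`: outer bindings first, then inner bindings -/
def mergeEnv {n m : ℕ} (b : Fin (n+1) → Exp S) (b2 : Fin (m+1) → Exp S) :
    Fin (n+m+1+1) → Exp S :=
  fun j => if h : (j : ℕ) < n+1
    then rename (rhoOut (n+1) (m+1)) (b ⟨j, h⟩)
    else rename (rhoIn (n+1) (m+1)) (b2 ⟨(j : ℕ) - (n+1), by omega⟩)

/-- merged environment of `(llet-e)`: the environment of the letrec bound at `i`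
is flattened into the outer environment, the binding `i` becomes the inner body -/
def mergeEnvAt {n m : ℕ} (b : Fin (n+1) → Exp S) (i : Fin (n+1))
    (b2 : Fin (m+1) → Exp S) (t2 : Exp S) : Fin (n+m+1+1) → Exp S :=
  fun j => if h : (j : ℕ) < n+1
    then (if (⟨j, h⟩ : Fin (n+1)) = i
          then rename (rhoIn (n+1) (m+1)) t2
          else rename (rhoOut (n+1) (m+1)) (b ⟨j, h⟩))
    else rename (rhoIn (n+1) (m+1)) (b2 ⟨(j : ℕ) - (n+1), by omega⟩)

/-- the environment produced by `(case-in)`/`(case-e)` with `arity c = m+1`: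
all old bindings are shifted, binding `j` becomes `c y1 … y_{m+1}` for the fresh
bindings `y_q = s_q` appended at the end -/
def caseShareEnv {n m : ℕ} (b : Fin (n+1) → Exp S) (j : Fin (n+1))
    {T : S.TyName} (c : S.CName T) (h : S.arity T c = m+1)
    (args : Fin (S.arity T c) → Exp S) : Fin (n+m+1+1) → Exp S :=
  fun p => if hp : (p : ℕ) < n+1
    then (if (⟨p, hp⟩ : Fin (n+1)) = j
          then .constr T c (fun q => .var (n+1+(q : ℕ)))
          else rename (rhoOut (n+1) (m+1)) (b ⟨p, hp⟩))
    else rename (rhoOut (n+1) (m+1)) (args (Fin.cast h.symm ⟨(p : ℕ) - (n+1), by omega⟩))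

/-- the replacement for a `(case-in)`/`(case-e)` redex: `letrec z1 = y1, …, z_{m+1} = y_{m+1}
in alt`, where the `y_q` are the fresh environment bindings (indices `n+1+q` at top level) -/
def caseShareBody {n m : ℕ} {T : S.TyName} (c : S.CName T) (_h : S.arity T c = m+1)
    (alts : (c : S.CName T) → Exp S) : Exp S :=
  .letrecE m (fun q => .var (n+1+(m+1)+(q : ℕ)))
    (rename (liftN (m+1) (rhoOut (n+1) (m+1))) (alts c))

/-- the basic `LR`-rules not involving the top-level environment:
(lbeta), (seq-c), (case-c), (lapp), (lseq), (lcase) -/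
inductive LRbase : Exp S → Exp S → Prop where
  | lbeta {u t} :
      LRbase (.app (.lam u) t) (.letrecE 0 (fun _ => rename (· + 1) t) u)
  | seqc {v t} : isValue v → LRbase (.seqE v t) t
  | casec0 {T c args alts} (h : S.arity T c = 0) :
      LRbase (.caseE T (.constr T c args) alts) (alts c)
  | casec1 {T c args alts m} (h : S.arity T c = m+1) :
      LRbase (.caseE T (.constr T c args) alts)
        (.letrecE m (fun i => rename (· + (m+1)) (args (Fin.cast h.symm i))) (alts c))
  | lapp {n b e t} :
      LRbase (.app (.letrecE n b e) t) (.letrecE n b (.app e (rename (· + (n+1)) t)))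
  | lseq {n b e t} :
      LRbase (.seqE (.letrecE n b e) t) (.letrecE n b (.seqE e (rename (· + (n+1)) t)))
  | lcase {n b e T alts} :
      LRbase (.caseE T (.letrecE n b e) alts)
        (.letrecE n b (.caseE T e (fun c => rename (liftN (S.arity T c) (· + (n+1))) (alts c))))

/-- normal-order reduction `→_LR` of the call-by-need calculus `LR`:
the rules of Fig. 1, applied at the position determined by the labeling algorithm
(in the body or in a needed binding of the top-level letrec, or — for expressions
without a top-level letrec — along the application/seq/case spine). -/
inductive LRstep : Exp S → Exp S → Prop where
  /- basic rule at the top (no top-level letrec environment involved): -/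
  | topA {A : ACtx S} {r r'} : LRbase r r' → LRstep (plugA A r) (plugA A r')
  /- basic rule in the body of the top-level letrec: -/
  | bodyA {n} {b : Fin (n+1) → Exp S} {A : ACtx S} {r r'} :
      LRbase r r' → LRstep (.letrecE n b (plugA A r)) (.letrecE n b (plugA A r'))
  /- basic rule inside a needed binding: -/
  | bindA {n} {b : Fin (n+1) → Exp S} {body} {i : Fin (n+1)} {A : ACtx S} {r r'} :
      Needed b body i → b i = plugA A r → LRbase r r' →
      LRstep (.letrecE n b body) (.letrecE n (Function.update b i (plugA A r')) body)
  /- (llet-in): -/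
  | lletIn {n b m b2 t2} :
      LRstep (.letrecE n b (.letrecE m b2 t2))
        (.letrecE (n+m+1) (mergeEnv b b2) (rename (rhoIn (n+1) (m+1)) t2))
  /- (llet-e): -/
  | lletE {n b body} {i : Fin (n+1)} {m b2 t2} :
      Needed b body i → b i = .letrecE m b2 t2 →
      LRstep (.letrecE n b body)
        (.letrecE (n+m+1) (mergeEnvAt b i b2 t2) (rename (rhoOut (n+1) (m+1)) body))
  /- (cp-in): -/
  | cpIn {n} {b : Fin (n+1) → Exp S} {A : ACtx S} {i j : Fin (n+1)} {u} :
      derefChain b i j → b j = .lam u →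
      LRstep (.letrecE n b (plugA A (.var (i : ℕ)))) (.letrecE n b (plugA A (.lam u)))
  /- (cp-e): -/
  | cpE {n} {b : Fin (n+1) → Exp S} {body} {k : Fin (n+1)} {A : ACtx S} {i j : Fin (n+1)} {u} :
      Needed b body k → b k = plugA A (.var (i : ℕ)) → derefChain b i j → b j = .lam u →
      LRstep (.letrecE n b body) (.letrecE n (Function.update b k (plugA A (.lam u))) body)
  /- (seq-in): -/
  | seqIn {n} {b : Fin (n+1) → Exp S} {A : ACtx S} {i j : Fin (n+1)} {t} :
      derefChain b i j → isConstrApp (b j) →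
      LRstep (.letrecE n b (plugA A (.seqE (.var (i : ℕ)) t)))
        (.letrecE n b (plugA A t))
  /- (seq-e): -/
  | seqEe {n} {b : Fin (n+1) → Exp S} {body} {k : Fin (n+1)} {A : ACtx S} {i j : Fin (n+1)} {t} :
      Needed b body k → b k = plugA A (.seqE (.var (i : ℕ)) t) →
      derefChain b i j → isConstrApp (b j) →
      LRstep (.letrecE n b body) (.letrecE n (Function.update b k (plugA A t)) body)
  /- (case-in), scrutinized constructor of arity 0: -/
  | caseIn0 {n} {b : Fin (n+1) → Exp S} {A : ACtx S} {i j : Fin (n+1)} {T c args alts} :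
      derefChain b i j → b j = .constr T c args → S.arity T c = 0 →
      LRstep (.letrecE n b (plugA A (.caseE T (.var (i : ℕ)) alts)))
        (.letrecE n b (plugA A (alts c)))
  /- (case-e), scrutinized constructor of arity 0: -/
  | caseE0 {n} {b : Fin (n+1) → Exp S} {body} {k : Fin (n+1)} {A : ACtx S} {i j : Fin (n+1)}
      {T c args alts} :
      Needed b body k → b k = plugA A (.caseE T (.var (i : ℕ)) alts) →
      derefChain b i j → b j = .constr T c args → S.arity T c = 0 →
      LRstep (.letrecE n b body) (.letrecE n (Function.update b k (plugA A (alts c))) body)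
  /- (case-in), arity ≥ 1: the constructor arguments are shared in fresh bindings -/
  | caseIn1 {n} {b : Fin (n+1) → Exp S} {A : ACtx S} {i j : Fin (n+1)} {T c args alts m}
      (h : S.arity T c = m+1) :
      derefChain b i j → b j = .constr T c args →
      LRstep (.letrecE n b (plugA A (.caseE T (.var (i : ℕ)) alts)))
        (.letrecE (n+m+1) (caseShareEnv b j c h args)
          (plugA (renameA (rhoOut (n+1) (m+1)) A) (caseShareBody (n := n) c h alts)))
  /- (case-e), arity ≥ 1: -/
  | caseE1 {n} {b : Fin (n+1) → Exp S} {body} {k : Fin (n+1)} {A : ACtx S} {i j : Fin (n+1)}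
      {T c args alts m} (h : S.arity T c = m+1) :
      Needed b body k → b k = plugA A (.caseE T (.var (i : ℕ)) alts) →
      derefChain b i j → b j = .constr T c args →
      LRstep (.letrecE n b body)
        (.letrecE (n+m+1)
          (Function.update (caseShareEnv b j c h args)
            (Fin.castLE (by omega) k)
            (plugA (renameA (rhoOut (n+1) (m+1)) A) (caseShareBody (n := n) c h alts)))
          (rename (rhoOut (n+1) (m+1)) body))

/-- weak head normal forms of `LR`: values, `letrec Env in v` for a value `v`, and
`letrec x1 = (c s⃗), x2 = x1, …, xm = x_{m-1}, Env in xm` -/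
def isLRwhnf (s : Exp S) : Prop :=
  isValue s ∨
  ∃ (n : ℕ) (b : Fin (n+1) → Exp S) (body : Exp S), s = .letrecE n b body ∧
    (isValue body ∨ ∃ i j : Fin (n+1), body = .var (i : ℕ) ∧ derefChain b i j ∧ isConstrApp (b j))

/-- `s` reduces in finitely many `→_LR`-steps to an `LR`-WHNF `v` -/
def lrConvTo (s v : Exp S) : Prop := Relation.ReflTransGen LRstep s v ∧ isLRwhnf v

/-- convergence in `LR` -/
def lrConv (s : Exp S) : Prop := ∃ v, lrConvTo s v

/-- contextual preorder of `LR` -/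
def leLR (s t : Exp S) : Prop := ∀ C : Ctx S, lrConv (plugC C s) → lrConv (plugC C t)

/-- contextual equivalence of `LR` -/
def eqLR (s t : Exp S) : Prop := leLR s t ∧ leLR t s

end Core
namespace Core

variable {S : Sig}

/-! ## The call-by-name calculus `L_name` -/

/-- a letrec frame (one `letrec` environment) -/
def Frame (S : Sig) : Type := Σ n : ℕ, Fin (n+1) → Exp S

/-- plugging under a stack of letrec frames (`L`-contexts), outermost frame first -/
def plugFrames : List (Frame S) → Exp S → Exp S
  | [], e => e
  | ⟨n, b⟩ :: fs, e => .letrecE n b (plugFrames fs e)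

/-- looking up a de Bruijn index in a stack of letrec frames given innermost-first;
the result is weakened to the innermost level -/
def lookRev : List (Frame S) → ℕ → Option (Exp S)
  | [], _ => none
  | ⟨n, b⟩ :: rest, k =>
      if h : k < n+1 then some (b ⟨k, h⟩)
      else (lookRev rest (k - (n+1))).map (rename (· + (n+1)))

/-- the basic rules of `L_name`: (beta), (seq), (case) — with substitution —
and (lapp), (lseq), (lcase) -/
inductive NBase : Exp S → Exp S → Prop where
  | beta {u t} : NBase (.app (.lam u) t) (subst (consSub t) u)
  | seqv {v t} : isValue v → NBase (.seqE v t) t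
  | casec {T c args alts} :
      NBase (.caseE T (.constr T c args) alts) (subst (instSub args) (alts c))
  | lapp {n b e t} :
      NBase (.app (.letrecE n b e) t) (.letrecE n b (.app e (rename (· + (n+1)) t)))
  | lseq {n b e t} :
      NBase (.seqE (.letrecE n b e) t) (.letrecE n b (.seqE e (rename (· + (n+1)) t)))
  | lcase {n b e T alts} :
      NBase (.caseE T (.letrecE n b e) alts)
        (.letrecE n b (.caseE T e (fun c => rename (liftN (S.arity T c) (· + (n+1))) (alts c))))

/-- normal-order reduction `→_name` of `L_name`: a basic rule, or the copy rule (gcp),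
inside a reduction context `L[A]` -/
inductive NStep : Exp S → Exp S → Prop where
  | base {fs : List (Frame S)} {A : ACtx S} {r r'} :
      NBase r r' → NStep (plugFrames fs (plugA A r)) (plugFrames fs (plugA A r'))
  | gcp {fs : List (Frame S)} {A : ACtx S} {k : ℕ} {e : Exp S} :
      lookRev fs.reverse k = some e →
      NStep (plugFrames fs (plugA A (.var k))) (plugFrames fs (plugA A e))

/-- weak head normal forms of `L_name`: `L[v]` for a value `v` -/
def isNameWhnf (s : Exp S) : Prop :=
  ∃ (fs : List (Frame S)) (v : Exp S), s = plugFrames fs v ∧ isValue v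

/-- `s` reduces in finitely many `→_name`-steps to an `L_name`-WHNF `v` -/
def nameConvTo (s v : Exp S) : Prop := Relation.ReflTransGen NStep s v ∧ isNameWhnf v

/-- convergence in `L_name` -/
def nameConv (s : Exp S) : Prop := ∃ v, nameConvTo s v

/-- contextual preorder of `L_name` -/
def leName (s t : Exp S) : Prop := ∀ C : Ctx S, nameConv (plugC C s) → nameConv (plugC C t)

/-- contextual equivalence of `L_name` -/
def eqName (s t : Exp S) : Prop := leName s t ∧ leName t s

/-! ## The translation `N : L_name → L_lcc` via multi-fixpoint combinators -/

/-- iterated application `f a1 … an` -/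
def apps (f : Exp S) (l : List (Exp S)) : Exp S := l.foldl .app f

/-- iterated abstraction `λ^k. e` -/
def lamN : ℕ → Exp S → Exp S
  | 0, e => e
  | (k+1), e => .lam (lamN k e)

/-- shift all indices `≥ c` by `k` -/
def shiftCut (c k : ℕ) : Exp S → Exp S := rename (fun x => if x < c then x else x + k)

/-- the argument list `[g (N-1), …, g 0]`, so that after `N` beta steps the
binder with de Bruijn index `i` receives `g i` -/
def argsOf {N : ℕ} (g : Fin N → Exp S) : List (Exp S) := (List.ofFn g).reverse

/-- `U_i = (x_i' x_1' … x_n')` (under the outer binders) -/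
def Uarg (N : ℕ) (i : Fin N) : Exp S :=
  apps (.var (i : ℕ)) (argsOf (fun j : Fin N => .var (j : ℕ)))

/-- `X_i' = λ x1 … xn. F_i (x1 x1 … xn) … (xn x1 … xn)` with `F_i = λ x1 … xn. gi` -/
def Xarg (N : ℕ) (gi : Exp S) : Exp S :=
  lamN N (apps (lamN N (shiftCut N N gi))
    (argsOf (fun j : Fin N => apps (.var (j : ℕ)) (argsOf (fun l : Fin N => .var (l : ℕ))))))

/-- the translation of one letrec: `(λ x1' … xn'. (λ x1 … xn. t') U1 … Un) X1' … Xn'` -/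
def letrecTrans (N : ℕ) (g : Fin N → Exp S) (t' : Exp S) : Exp S :=
  apps (lamN N (apps (lamN N (shiftCut N N t')) (argsOf (Uarg N))))
    (argsOf (fun i => Xarg N (g i)))

/-- the translation `N : L_name → L_lcc`, eliminating letrec by multi-fixpoint
combinators; it is homomorphic on all other constructs.
(The translation `W : LR → L_name` is the identity.) -/
def Ntr : Exp S → Exp S
  | .var k => .var k
  | .app u v => .app (Ntr u) (Ntr v)
  | .lam u => .lam (Ntr u)
  | .constr T c args => .constr T c (fun i => Ntr (args i))
  | .seqE u v => .seqE (Ntr u) (Ntr v)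
  | .caseE T e alts => .caseE T (Ntr e) (fun c => Ntr (alts c))
  | .letrecE n b t => letrecTrans (n+1) (fun i => Ntr (b i)) (Ntr t)

end Core
namespace Core

variable {S : Sig}

/-! ## `Q`-similarity in `LR` -/

/-- open extension of a relation w.r.t. closing ℒ-substitutions -/
def openAll (η : Exp S → Exp S → Prop) (s t : Exp S) : Prop :=
  ∀ σ : ℕ → Exp S, closed (subst σ s) → closed (subst σ t) → η (subst σ s) (subst σ t)

/-- the `Q`-experiment operator for `LR`, instantiated with a set `𝒬` of contexts -/
def FQLR (𝒬 : Set (Exp S → Exp S)) (η : Exp S → Exp S → Prop) (s t : Exp S) : Prop :=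
  ∀ v1, lrConvTo s v1 → ∃ v2, lrConvTo t v2 ∧ ∀ f ∈ 𝒬, η (f v1) (f v2)

/-- `𝒬`-similarity in `LR` -/
def simQLR (𝒬 : Set (Exp S → Exp S)) : Exp S → Exp S → Prop := gfpRel (FQLR 𝒬)

/-- the inductively defined preorder `≤_{LR,𝒬}` -/
def leQLR (𝒬 : Set (Exp S → Exp S)) (s t : Exp S) : Prop :=
  ∀ l : List (Exp S → Exp S), (∀ f ∈ l, f ∈ 𝒬) →
    lrConv (applyAll l s) → lrConv (applyAll l t)

end Core

/-! ### Auxiliary development: substitution calculus -/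

namespace Core

variable {S : Sig}

theorem rename_ext {f g : ℕ → ℕ} (h : ∀ k, f k = g k) (e : Exp S) :
    rename f e = rename g e := by
  have : f = g := funext h; rw [this]

theorem subst_ext {σ τ : ℕ → Exp S} (h : ∀ k, σ k = τ k) (e : Exp S) :
    subst σ e = subst τ e := by
  have : σ = τ := funext h; rw [this]

theorem liftN_comp (m : ℕ) (f g : ℕ → ℕ) (k : ℕ) :
    liftN m f (liftN m g k) = liftN m (fun x => f (g x)) k := by
  simp only [liftN]
  by_cases h : k < m
  · simp [h]
  · simp only [if_neg h]
    have h2 : ¬ (g (k - m) + m < m) := by omega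
    simp only [if_neg h2]
    congr 2
    omega

theorem rename_rename (f g : ℕ → ℕ) (e : Exp S) :
    rename f (rename g e) = rename (fun k => f (g k)) e := by
  induction e generalizing f g with
  | var k => rfl
  | app u v ihu ihv => simp [rename, ihu, ihv]
  | lam u ih =>
      simp only [rename]; rw [ih]
      exact congrArg _ (rename_ext (liftN_comp 1 f g) u)
  | constr T c args ih =>
      simp only [rename]; congr 1; funext i; exact ih i f g
  | seqE u v ihu ihv => simp [rename, ihu, ihv]
  | caseE T sc alts ihsc ihalts =>
      simp only [rename]; rw [ihsc]; congr 1; funext c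
      rw [ihalts c]; exact rename_ext (liftN_comp _ f g) _
  | letrecE n b t ihb iht =>
      simp only [rename]; congr 1
      · funext i; rw [ihb i]; exact rename_ext (liftN_comp _ f g) _
      · rw [iht]; exact rename_ext (liftN_comp _ f g) _

theorem liftN_id (m : ℕ) (k : ℕ) : liftN m (fun x => x) k = k := by
  simp only [liftN]; split <;> omega

theorem rename_id (e : Exp S) : rename (fun x => x) e = e := by
  induction e with
  | var k => rfl
  | app u v ihu ihv => simp [rename, ihu, ihv]
  | lam u ih => simp only [rename]; rw [rename_ext (liftN_id 1), ih]
  | constr T c args ih => simp only [rename]; congr 1; funext i; exact ih i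
  | seqE u v ihu ihv => simp [rename, ihu, ihv]
  | caseE T sc alts ihsc ihalts =>
      simp only [rename]; rw [ihsc]; congr 1; funext c
      rw [rename_ext (liftN_id _), ihalts c]
  | letrecE n b t ihb iht =>
      simp only [rename]; congr 1
      · funext i; rw [rename_ext (liftN_id _), ihb i]
      · rw [rename_ext (liftN_id _), iht]

theorem upN_liftN (m : ℕ) (σ : ℕ → Exp S) (f : ℕ → ℕ) (k : ℕ) :
    upN m σ (liftN m f k) = upN m (fun x => σ (f x)) k := by
  simp only [upN, liftN]
  by_cases h : k < m
  · simp [h]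
  · simp only [if_neg h]
    have h2 : ¬ (f (k - m) + m < m) := by omega
    simp only [if_neg h2]
    congr 2
    omega

theorem subst_rename (σ : ℕ → Exp S) (f : ℕ → ℕ) (e : Exp S) :
    subst σ (rename f e) = subst (fun k => σ (f k)) e := by
  induction e generalizing σ f with
  | var k => rfl
  | app u v ihu ihv => simp [rename, subst, ihu, ihv]
  | lam u ih =>
      simp only [rename, subst]; rw [ih]
      exact congrArg _ (subst_ext (upN_liftN 1 σ f) u)
  | constr T c args ih =>
      simp only [rename, subst]; congr 1; funext i; exact ih i σ f
  | seqE u v ihu ihv => simp [rename, subst, ihu, ihv]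
  | caseE T sc alts ihsc ihalts =>
      simp only [rename, subst]; rw [ihsc]; congr 1; funext c
      rw [ihalts c]; exact subst_ext (upN_liftN _ σ f) _
  | letrecE n b t ihb iht =>
      simp only [rename, subst]; congr 1
      · funext i; rw [ihb i]; exact subst_ext (upN_liftN _ σ f) _
      · rw [iht]; exact subst_ext (upN_liftN _ σ f) _

theorem liftN_upN (m : ℕ) (f : ℕ → ℕ) (σ : ℕ → Exp S) (k : ℕ) :
    rename (liftN m f) (upN m σ k) = upN m (fun x => rename f (σ x)) k := by
  simp only [upN]
  by_cases h : k < m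
  · simp only [if_pos h, rename]
    simp [liftN, h]
  · simp only [if_neg h, rename_rename]
    apply rename_ext
    intro x
    simp only [liftN]
    have : ¬ (x + m < m) := by omega
    simp only [if_neg this]
    congr 2
    omega

theorem rename_subst (f : ℕ → ℕ) (σ : ℕ → Exp S) (e : Exp S) :
    rename f (subst σ e) = subst (fun k => rename f (σ k)) e := by
  induction e generalizing σ f with
  | var k => rfl
  | app u v ihu ihv => simp [rename, subst, ihu, ihv]
  | lam u ih =>
      simp only [rename, subst]; rw [ih]
      exact congrArg _ (subst_ext (liftN_upN 1 f σ) u)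
  | constr T c args ih =>
      simp only [rename, subst]; congr 1; funext i; exact ih i f σ
  | seqE u v ihu ihv => simp [rename, subst, ihu, ihv]
  | caseE T sc alts ihsc ihalts =>
      simp only [rename, subst]; rw [ihsc]; congr 1; funext c
      rw [ihalts c]; exact subst_ext (liftN_upN _ f σ) _
  | letrecE n b t ihb iht =>
      simp only [rename, subst]; congr 1
      · funext i; rw [ihb i]; exact subst_ext (liftN_upN _ f σ) _
      · rw [iht]; exact subst_ext (liftN_upN _ f σ) _

theorem upN_upN_comp (m : ℕ) (σ τ : ℕ → Exp S) (k : ℕ) :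
    subst (upN m σ) (upN m τ k) = upN m (fun x => subst σ (τ x)) k := by
  simp only [upN]
  by_cases h : k < m
  · simp [if_pos h, subst, upN, h]
  · simp only [if_neg h, subst_rename, rename_subst]
    apply subst_ext
    intro x
    simp only [upN]
    have : ¬ (x + m < m) := by omega
    simp only [if_neg this]
    congr 2
    omega

theorem subst_subst (σ τ : ℕ → Exp S) (e : Exp S) :
    subst σ (subst τ e) = subst (fun k => subst σ (τ k)) e := by
  induction e generalizing σ τ with
  | var k => rfl
  | app u v ihu ihv => simp [subst, ihu, ihv]
  | lam u ih =>
      simp only [subst]; rw [ih]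
      exact congrArg _ (subst_ext (upN_upN_comp 1 σ τ) u)
  | constr T c args ih =>
      simp only [subst]; congr 1; funext i; exact ih i σ τ
  | seqE u v ihu ihv => simp [subst, ihu, ihv]
  | caseE T sc alts ihsc ihalts =>
      simp only [subst]; rw [ihsc]; congr 1; funext c
      rw [ihalts c]; exact subst_ext (upN_upN_comp _ σ τ) _
  | letrecE n b t ihb iht =>
      simp only [subst]; congr 1
      · funext i; rw [ihb i]; exact subst_ext (upN_upN_comp _ σ τ) _
      · rw [iht]; exact subst_ext (upN_upN_comp _ σ τ) _

theorem rename_eq_subst (f : ℕ → ℕ) (e : Exp S) :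
    rename f e = subst (fun k => .var (f k)) e := by
  induction e generalizing f with
  | var k => rfl
  | app u v ihu ihv => simp [rename, subst, ihu, ihv]
  | lam u ih =>
      simp only [rename, subst]; rw [ih]
      refine congrArg _ (subst_ext (fun k => ?_) u)
      simp only [upN, liftN]
      by_cases h : k < 1
      · simp [h]
      · simp only [if_neg h, rename]
  | constr T c args ih =>
      simp only [rename, subst]; congr 1; funext i; exact ih i f
  | seqE u v ihu ihv => simp [rename, subst, ihu, ihv]
  | caseE T sc alts ihsc ihalts =>
      simp only [rename, subst]; rw [ihsc]; congr 1; funext c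
      rw [ihalts c]
      refine subst_ext (fun k => ?_) _
      simp only [upN, liftN]
      by_cases h : k < S.arity T c
      · simp [h]
      · simp [if_neg h, rename]
  | letrecE n b t ihb iht =>
      simp only [rename, subst]
      congr 1
      · funext i; rw [ihb i]
        refine subst_ext (fun k => ?_) _
        simp only [upN, liftN]
        by_cases h : k < n + 1
        · simp [h]
        · have h' : ¬ k ≤ n := by omega
          simp [if_neg h, h', rename]
      · rw [iht]
        refine subst_ext (fun k => ?_) _
        simp only [upN, liftN]
        by_cases h : k < n + 1
        · simp [h]
        · have h' : ¬ k ≤ n := by omega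
          simp [if_neg h, h', rename]

theorem subst_id_of {d : ℕ} {σ : ℕ → Exp S} (hσ : ∀ k, k < d → σ k = .var k)
    {e : Exp S} (he : closedUnder d e) : subst σ e = e := by
  induction e generalizing d σ with
  | var k => exact hσ k he
  | app u v ihu ihv =>
      obtain ⟨h1, h2⟩ := he
      simp only [subst]; rw [ihu hσ h1, ihv hσ h2]
  | lam u ih =>
      simp only [subst]
      rw [ih (d := d + 1) (fun k hk => ?_) he]
      simp only [upN]
      rcases Nat.eq_zero_or_pos k with h | h
      · simp [h]
      · have hk1 : ¬ (k < 1) := by omega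
        simp only [if_neg hk1]
        rw [hσ (k - 1) (by omega)]
        simp only [rename]
        congr 1
        omega
  | constr T c args ih =>
      simp only [subst]; congr 1; funext i; exact ih i hσ (he i)
  | seqE u v ihu ihv =>
      obtain ⟨h1, h2⟩ := he
      simp only [subst]; rw [ihu hσ h1, ihv hσ h2]
  | caseE T sc alts ihsc ihalts =>
      obtain ⟨h1, h2⟩ := he
      simp only [subst]; rw [ihsc hσ h1]; congr 1; funext c
      refine ihalts c (d := d + S.arity T c) (fun k hk => ?_) (h2 c)
      simp only [upN]
      by_cases h : k < S.arity T c
      · simp [h]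
      · simp only [if_neg h]
        rw [hσ (k - S.arity T c) (by omega)]
        simp only [rename]; congr 1; omega
  | letrecE n b t ihb iht =>
      obtain ⟨h1, h2⟩ := he
      have key : ∀ k, k < d + (n+1) → upN (n+1) σ k = .var k := by
        intro k hk
        simp only [upN]
        by_cases h : k < n + 1
        · simp [h]
        · simp only [if_neg h]
          rw [hσ (k - (n+1)) (by omega)]
          simp only [rename]; congr 1; omega
      simp only [subst]; congr 1
      · funext i; exact ihb i key (h1 i)
      · exact iht key h2

theorem subst_var (e : Exp S) : subst .var e = e := by
  induction e with
  | var k => rfl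
  | app u v ihu ihv => simp [subst, ihu, ihv]
  | lam u ih =>
      simp only [subst]
      rw [subst_ext (τ := Exp.var) (fun k => ?_) u, ih]
      simp only [upN]
      by_cases h : k < 1
      · simp [h]
      · simp only [if_neg h, rename]; congr 1; omega
  | constr T c args ih => simp only [subst]; congr 1; funext i; exact ih i
  | seqE u v ihu ihv => simp [subst, ihu, ihv]
  | caseE T sc alts ihsc ihalts =>
      simp only [subst]; rw [ihsc]; congr 1; funext c
      rw [subst_ext (τ := Exp.var) (fun k => ?_) (alts c), ihalts c]
      simp only [upN]
      by_cases h : k < S.arity T c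
      · simp [h]
      · simp only [if_neg h, rename]; congr 1; omega
  | letrecE n b t ihb iht =>
      have key : ∀ k, upN (n+1) (Exp.var (S := S)) k = .var k := by
        intro k
        simp only [upN]
        by_cases h : k < n + 1
        · simp [h]
        · simp only [if_neg h, rename]; congr 1; omega
      simp only [subst]; congr 1
      · funext i; rw [subst_ext key (b i), ihb i]
      · rw [subst_ext key t, iht]

theorem subst_closed {σ : ℕ → Exp S} {e : Exp S} (he : closed e) : subst σ e = e :=
  subst_id_of (fun k hk => absurd hk (Nat.not_lt_zero k)) he

theorem rename_closed {f : ℕ → ℕ} {e : Exp S} (he : closed e) : rename f e = e := by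
  rw [rename_eq_subst]; exact subst_closed he

theorem subst_congr_on {d : ℕ} {σ τ : ℕ → Exp S} {e : Exp S} (he : closedUnder d e)
    (h : ∀ k, k < d → σ k = τ k) : subst σ e = subst τ e := by
  induction e generalizing d σ τ with
  | var k => exact h k he
  | app u v ihu ihv =>
      obtain ⟨h1, h2⟩ := he
      simp only [subst]; rw [ihu h1 h, ihv h2 h]
  | lam u ih =>
      simp only [subst]
      rw [ih (d := d + 1) he (fun k hk => ?_)]
      simp only [upN]
      by_cases hk1 : k < 1
      · simp [hk1]
      · simp only [if_neg hk1]
        rw [h (k - 1) (by omega)]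
  | constr T c args ih =>
      simp only [subst]; congr 1; funext i; exact ih i (he i) h
  | seqE u v ihu ihv =>
      obtain ⟨h1, h2⟩ := he
      simp only [subst]; rw [ihu h1 h, ihv h2 h]
  | caseE T sc alts ihsc ihalts =>
      obtain ⟨h1, h2⟩ := he
      simp only [subst]; rw [ihsc h1 h]; congr 1; funext c
      refine ihalts c (h2 c) (fun k hk => ?_)
      simp only [upN]
      by_cases hk1 : k < S.arity T c
      · simp [hk1]
      · simp only [if_neg hk1]
        rw [h (k - S.arity T c) (by omega)]
  | letrecE n b t ihb iht =>
      obtain ⟨h1, h2⟩ := he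
      have key : ∀ k, k < d + (n+1) → upN (n+1) σ k = upN (n+1) τ k := by
        intro k hk
        simp only [upN]
        by_cases hk1 : k < n + 1
        · simp [hk1]
        · simp only [if_neg hk1]
          rw [h (k - (n+1)) (by omega)]
      simp only [subst]; congr 1
      · funext i; exact ihb i (h1 i) key
      · exact iht h2 key

theorem closedUnder_mono {d d' : ℕ} (hdd : d ≤ d') {e : Exp S} (he : closedUnder d e) :
    closedUnder d' e := by
  induction e generalizing d d' with
  | var k => exact lt_of_lt_of_le he hdd
  | app u v ihu ihv => exact ⟨ihu hdd he.1, ihv hdd he.2⟩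
  | lam u ih => exact ih (by omega) he
  | constr T c args ih => exact fun i => ih i hdd (he i)
  | seqE u v ihu ihv => exact ⟨ihu hdd he.1, ihv hdd he.2⟩
  | caseE T sc alts ihsc ihalts =>
      exact ⟨ihsc hdd he.1, fun c => ihalts c (by omega) (he.2 c)⟩
  | letrecE n b t ihb iht =>
      exact ⟨fun i => ihb i (by omega) (he.1 i), iht (by omega) he.2⟩

theorem closedUnder_rename {d d' : ℕ} {f : ℕ → ℕ} {e : Exp S} (he : closedUnder d e)
    (hf : ∀ k, k < d → f k < d') : closedUnder d' (rename f e) := by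
  induction e generalizing d d' f with
  | var k => exact hf k he
  | app u v ihu ihv => exact ⟨ihu he.1 hf, ihv he.2 hf⟩
  | lam u ih =>
      refine ih (d := d+1) he (fun k hk => ?_)
      simp only [liftN]
      by_cases h1 : k < 1
      · simp [h1]; omega
      · simp only [if_neg h1]
        have := hf (k - 1) (by omega)
        omega
  | constr T c args ih => exact fun i => ih i (he i) hf
  | seqE u v ihu ihv => exact ⟨ihu he.1 hf, ihv he.2 hf⟩
  | caseE T sc alts ihsc ihalts =>
      refine ⟨ihsc he.1 hf, fun c => ihalts c (he.2 c) (fun k hk => ?_)⟩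
      simp only [liftN]
      by_cases h1 : k < S.arity T c
      · simp [h1]; omega
      · simp only [if_neg h1]
        have := hf (k - S.arity T c) (by omega)
        omega
  | letrecE n b t ihb iht =>
      have key : ∀ k, k < d + (n+1) → liftN (n+1) f k < d' + (n+1) := by
        intro k hk
        simp only [liftN]
        by_cases h1 : k < n + 1
        · simp [h1]; omega
        · simp only [if_neg h1]
          have := hf (k - (n+1)) (by omega)
          omega
      exact ⟨fun i => ihb i (he.1 i) key, iht he.2 key⟩

theorem closedUnder_rename_rev {d d' : ℕ} {f : ℕ → ℕ} {e : Exp S}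
    (he : closedUnder d' (rename f e)) (hf : ∀ k, f k < d' → k < d) : closedUnder d e := by
  induction e generalizing d d' f with
  | var k => exact hf k he
  | app u v ihu ihv => exact ⟨ihu he.1 hf, ihv he.2 hf⟩
  | lam u ih =>
      refine ih (d' := d'+1) he (fun k hk => ?_)
      simp only [liftN] at hk
      by_cases h1 : k < 1
      · omega
      · simp only [if_neg h1] at hk
        have := hf (k - 1) (by omega)
        omega
  | constr T c args ih => exact fun i => ih i (he i) hf
  | seqE u v ihu ihv => exact ⟨ihu he.1 hf, ihv he.2 hf⟩
  | caseE T sc alts ihsc ihalts =>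
      refine ⟨ihsc he.1 hf, fun c => ihalts c (he.2 c) (fun k hk => ?_)⟩
      simp only [liftN] at hk
      by_cases h1 : k < S.arity T c
      · omega
      · simp only [if_neg h1] at hk
        have := hf (k - S.arity T c) (by omega)
        omega
  | letrecE n b t ihb iht =>
      have key : ∀ k, liftN (n+1) f k < d' + (n+1) → k < d + (n+1) := by
        intro k hk
        simp only [liftN] at hk
        by_cases h1 : k < n + 1
        · omega
        · simp only [if_neg h1] at hk
          have := hf (k - (n+1)) (by omega)
          omega
      exact ⟨fun i => ihb i (he.1 i) key, iht he.2 key⟩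

theorem closedUnder_subst {d d' : ℕ} {σ : ℕ → Exp S} {e : Exp S} (he : closedUnder d e)
    (hσ : ∀ k, k < d → closedUnder d' (σ k)) : closedUnder d' (subst σ e) := by
  induction e generalizing d d' σ with
  | var k => exact hσ k he
  | app u v ihu ihv => exact ⟨ihu he.1 hσ, ihv he.2 hσ⟩
  | lam u ih =>
      refine ih (d := d+1) he (fun k hk => ?_)
      simp only [upN]
      by_cases h1 : k < 1
      · simp only [if_pos h1, closedUnder]; omega
      · simp only [if_neg h1]
        exact closedUnder_rename (hσ (k-1) (by omega)) (fun j hj => by omega)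
  | constr T c args ih => exact fun i => ih i (he i) hσ
  | seqE u v ihu ihv => exact ⟨ihu he.1 hσ, ihv he.2 hσ⟩
  | caseE T sc alts ihsc ihalts =>
      refine ⟨ihsc he.1 hσ, fun c => ihalts c (he.2 c) (fun k hk => ?_)⟩
      simp only [upN]
      by_cases h1 : k < S.arity T c
      · simp only [if_pos h1, closedUnder]; omega
      · simp only [if_neg h1]
        exact closedUnder_rename (hσ (k - S.arity T c) (by omega)) (fun j hj => by omega)
  | letrecE n b t ihb iht =>
      have key : ∀ k, k < d + (n+1) → closedUnder (d' + (n+1)) (upN (n+1) σ k) := by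
        intro k hk
        simp only [upN]
        by_cases h1 : k < n + 1
        · simp only [if_pos h1, closedUnder]; omega
        · simp only [if_neg h1]
          exact closedUnder_rename (hσ (k - (n+1)) (by omega)) (fun j hj => by omega)
      exact ⟨fun i => ihb i (he.1 i) key, iht he.2 key⟩

theorem upN_zero (σ : ℕ → Exp S) : upN 0 σ = σ := by
  funext k
  simp only [upN, Nat.not_lt_zero, if_false, Nat.sub_zero]
  rw [rename_ext (g := fun x => x) (fun x => Nat.add_zero x), rename_id]

theorem upN_add (a b : ℕ) (σ : ℕ → Exp S) : upN a (upN b σ) = upN (a + b) σ := by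
  funext k
  simp only [upN]
  by_cases h1 : k < a
  · have : k < a + b := by omega
    simp [h1, this]
  · simp only [if_neg h1]
    by_cases h2 : k < a + b
    · have h3 : k - a < b := by omega
      simp only [if_pos h2, if_pos h3, rename]
      congr 1; omega
    · have h3 : ¬ (k - a < b) := by omega
      simp only [if_neg h2, if_neg h3, rename_rename]
      rw [rename_ext (g := fun x => x + (a + b)) (fun x => by show x + b + a = x + (a+b); omega)]
      congr 2; omega

theorem closed_subst_all {σ : ℕ → Exp S} (hσ : ∀ k, closed (σ k)) (e : Exp S) :
    closed (subst σ e) := by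
  suffices h : ∀ (m : ℕ), closedUnder m (subst (upN m σ) e) by
    have := h 0
    rwa [upN_zero] at this
  induction e with
  | var k =>
      intro m
      simp only [subst, upN]
      by_cases h1 : k < m
      · simpa [h1, closedUnder]
      · simp only [if_neg h1]
        exact closedUnder_rename (hσ (k-m)) (fun j hj => by omega)
  | app u v ihu ihv => exact fun m => ⟨ihu m, ihv m⟩
  | lam u ih =>
      intro m
      simp only [subst, closedUnder, upN_add]
      rw [Nat.add_comm 1 m]
      exact ih (m + 1)
  | constr T c args ih => exact fun m i => ih i m
  | seqE u v ihu ihv => exact fun m => ⟨ihu m, ihv m⟩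
  | caseE T sc alts ihsc ihalts =>
      intro m
      refine ⟨ihsc m, fun c => ?_⟩
      simp only [subst, upN_add]
      rw [Nat.add_comm (S.arity T c) m]
      exact ihalts c (m + S.arity T c)
  | letrecE n b t ihb iht =>
      intro m
      constructor
      · intro i
        simp only [subst, upN_add]
        rw [Nat.add_comm (n+1) m]
        exact ihb i (m + (n+1))
      · simp only [subst, upN_add]
        rw [Nat.add_comm (n+1) m]
        exact iht (m + (n+1))

end Core

/-! ### Auxiliary development: values, atoms, reduction infrastructure -/

namespace Core

variable {S : Sig}

theorem value_cases {v : Exp S} (hv : isValue v) :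
    (∃ u, v = .lam u) ∨ (∃ T c args, v = .constr T c args) := by
  cases v <;> first
    | exact Or.inl ⟨_, rfl⟩
    | exact Or.inr ⟨_, _, _, rfl⟩
    | exact absurd hv (by simp [isValue])

theorem isValue_subst {v : Exp S} (hv : isValue v) (σ : ℕ → Exp S) :
    isValue (subst σ v) := by
  rcases value_cases hv with ⟨u, rfl⟩ | ⟨T, c, args, rfl⟩ <;> simp [subst, isValue]

theorem lfree_rename {e : Exp S} (he : lfree e) (f : ℕ → ℕ) : lfree (rename f e) := by
  induction e generalizing f with
  | var k => trivial
  | app u v ihu ihv => exact ⟨ihu he.1 _, ihv he.2 _⟩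
  | lam u ih => exact ih he _
  | constr T c args ih => exact fun i => ih i (he i) _
  | seqE u v ihu ihv => exact ⟨ihu he.1 _, ihv he.2 _⟩
  | caseE T sc alts ihsc ihalts => exact ⟨ihsc he.1 _, fun c => ihalts c (he.2 c) _⟩
  | letrecE n b t ihb iht => exact absurd he id

theorem lfree_subst {e : Exp S} {σ : ℕ → Exp S} (he : lfree e) (hσ : ∀ k, lfree (σ k)) :
    lfree (subst σ e) := by
  induction e generalizing σ with
  | var k => exact hσ k
  | app u v ihu ihv => exact ⟨ihu he.1 hσ, ihv he.2 hσ⟩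
  | lam u ih =>
      refine ih he (fun k => ?_)
      simp only [upN]
      split
      · trivial
      · exact lfree_rename (hσ _) _
  | constr T c args ih => exact fun i => ih i (he i) hσ
  | seqE u v ihu ihv => exact ⟨ihu he.1 hσ, ihv he.2 hσ⟩
  | caseE T sc alts ihsc ihalts =>
      refine ⟨ihsc he.1 hσ, fun c => ihalts c (he.2 c) (fun k => ?_)⟩
      simp only [upN]
      split
      · trivial
      · exact lfree_rename (hσ _) _
  | letrecE n b t ihb iht => exact absurd he id

theorem Omega_closed : closed (Omega : Exp S) := by
  refine ⟨?_, ?_⟩ <;> exact ⟨by norm_num [closedUnder], by norm_num [closedUnder]⟩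

theorem Omega_lfree : lfree (Omega : Exp S) := ⟨⟨trivial, trivial⟩, ⟨trivial, trivial⟩⟩

open Classical in
/-- patch a substitution to be everywhere-closed -/
noncomputable def patchS (σ : ℕ → Exp S) : ℕ → Exp S :=
  fun k => if closed (σ k) then σ k else Omega

theorem patchS_eq_of_closed {σ : ℕ → Exp S} {k : ℕ} (h : closed (σ k)) :
    patchS σ k = σ k := by
  unfold patchS; rw [if_pos h]

theorem patchS_closed (σ : ℕ → Exp S) (k : ℕ) : closed (patchS σ k) := by
  unfold patchS; split
  · assumption
  · exact Omega_closed

theorem patchS_lfree {σ : ℕ → Exp S} (hσ : ∀ k, lfree (σ k)) (k : ℕ) :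
    lfree (patchS σ k) := by
  unfold patchS; split
  · exact hσ k
  · exact Omega_lfree

theorem subst_patch_aux {σ : ℕ → Exp S} (e : Exp S) :
    ∀ m, closedUnder m (subst (upN m σ) e) → subst (upN m σ) e = subst (upN m (patchS σ)) e := by
  induction e with
  | var k =>
      intro m hm
      simp only [subst, upN] at hm ⊢
      by_cases h1 : k < m
      · simp [h1]
      · simp only [if_neg h1] at hm ⊢
        have hcl : closed (σ (k - m)) :=
          closedUnder_rename_rev hm (fun j hj => by omega)
        rw [patchS_eq_of_closed hcl]
  | app u v ihu ihv =>
      intro m hm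
      simp only [subst] at hm ⊢
      rw [ihu m hm.1, ihv m hm.2]
  | lam u ih =>
      intro m hm
      simp only [subst, upN_add] at hm ⊢
      rw [Nat.add_comm 1 m] at hm ⊢
      rw [ih (m+1) hm]
  | constr T c args ih =>
      intro m hm
      simp only [subst] at hm ⊢
      congr 1; funext i
      exact ih i m (hm i)
  | seqE u v ihu ihv =>
      intro m hm
      simp only [subst] at hm ⊢
      rw [ihu m hm.1, ihv m hm.2]
  | caseE T sc alts ihsc ihalts =>
      intro m hm
      simp only [subst, upN_add] at hm ⊢
      rw [ihsc m hm.1]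
      congr 1; funext c
      have := hm.2 c
      simp only [Nat.add_comm (S.arity T c) m] at this ⊢
      rw [ihalts c (m + S.arity T c) this]
  | letrecE n b t ihb iht =>
      intro m hm
      simp only [subst, upN_add] at hm ⊢
      rw [Nat.add_comm (n+1) m] at hm ⊢
      congr 1
      · funext i
        exact ihb i (m + (n+1)) (hm.1 i)
      · exact iht (m + (n+1)) hm.2

theorem subst_patch {σ : ℕ → Exp S} {e : Exp S} (h : closed (subst σ e)) :
    subst σ e = subst (patchS σ) e := by
  have := subst_patch_aux (σ := σ) e 0
  rw [upN_zero, upN_zero] at this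
  exact this h

end Core

/-! ### Auxiliary development: A-contexts, decomposition, determinism -/

namespace Core

variable {S : Sig}

/-- composition of A-contexts -/
def compA : ACtx S → ACtx S → ACtx S
  | .hole, B => B
  | .appA A t, B => .appA (compA A B) t
  | .seqA A t, B => .seqA (compA A B) t
  | .caseA T A alts, B => .caseA T (compA A B) alts

theorem plugA_compA (A B : ACtx S) (e : Exp S) :
    plugA (compA A B) e = plugA A (plugA B e) := by
  induction A with
  | hole => rfl
  | appA A t ih => simp [compA, plugA, ih]
  | seqA A t ih => simp [compA, plugA, ih]
  | caseA T A alts ih => simp [compA, plugA, ih]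

/-- substitution applied to an A-context -/
def substA (σ : ℕ → Exp S) : ACtx S → ACtx S
  | .hole => .hole
  | .appA A t => .appA (substA σ A) (subst σ t)
  | .seqA A t => .seqA (substA σ A) (subst σ t)
  | .caseA T A alts => .caseA T (substA σ A) (fun c => subst (upN (S.arity T c) σ) (alts c))

theorem subst_plugA (σ : ℕ → Exp S) (A : ACtx S) (e : Exp S) :
    subst σ (plugA A e) = plugA (substA σ A) (subst σ e) := by
  induction A with
  | hole => rfl
  | appA A t ih => simp [substA, plugA, subst, ih]
  | seqA A t ih => simp [substA, plugA, subst, ih]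
  | caseA T A alts ih => simp [substA, plugA, subst, ih]

/-- letrec-free A-contexts -/
def lfreeA : ACtx S → Prop
  | .hole => True
  | .appA A t => lfreeA A ∧ lfree t
  | .seqA A t => lfreeA A ∧ lfree t
  | .caseA T A alts => lfreeA A ∧ ∀ c, lfree (alts c)

theorem lfree_plugA {A : ACtx S} {e : Exp S} :
    lfree (plugA A e) ↔ (lfreeA A ∧ lfree e) := by
  induction A with
  | hole => simp [plugA, lfreeA, lfree]
  | appA A t ih =>
      show (lfree (plugA A e) ∧ lfree t) ↔ ((lfreeA A ∧ lfree t) ∧ lfree e)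
      rw [ih]; tauto
  | seqA A t ih =>
      show (lfree (plugA A e) ∧ lfree t) ↔ ((lfreeA A ∧ lfree t) ∧ lfree e)
      rw [ih]; tauto
  | caseA T A alts ih =>
      show (lfree (plugA A e) ∧ ∀ c, lfree (alts c)) ↔
        ((lfreeA A ∧ ∀ c, lfree (alts c)) ∧ lfree e)
      rw [ih]; tauto

/-- closedness of an A-context -/
def closedUnderA (d : ℕ) : ACtx S → Prop
  | .hole => True
  | .appA A t => closedUnderA d A ∧ closedUnder d t
  | .seqA A t => closedUnderA d A ∧ closedUnder d t
  | .caseA T A alts => closedUnderA d A ∧ ∀ c, closedUnder (d + S.arity T c) (alts c)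

theorem closedUnder_plugA {d : ℕ} {A : ACtx S} {e : Exp S} :
    closedUnder d (plugA A e) ↔ (closedUnderA d A ∧ closedUnder d e) := by
  induction A with
  | hole => simp [plugA, closedUnderA]
  | appA A t ih =>
      show (closedUnder d (plugA A e) ∧ closedUnder d t) ↔
        ((closedUnderA d A ∧ closedUnder d t) ∧ closedUnder d e)
      rw [ih]; tauto
  | seqA A t ih =>
      show (closedUnder d (plugA A e) ∧ closedUnder d t) ↔
        ((closedUnderA d A ∧ closedUnder d t) ∧ closedUnder d e)
      rw [ih]; tauto
  | caseA T A alts ih =>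
      show (closedUnder d (plugA A e) ∧ ∀ c, closedUnder (d + S.arity T c) (alts c)) ↔
        ((closedUnderA d A ∧ ∀ c, closedUnder (d + S.arity T c) (alts c)) ∧ closedUnder d e)
      rw [ih]; tauto

theorem plugA_value {A : ACtx S} {e : Exp S} (h : isValue (plugA A e)) : A = .hole := by
  cases A with
  | hole => rfl
  | appA A t => exact absurd h (by simp [plugA, isValue])
  | seqA A t => exact absurd h (by simp [plugA, isValue])
  | caseA T A alts => exact absurd h (by simp [plugA, isValue])

/-- redexes -/
def isRedex (r : Exp S) : Prop := ∃ r', LccBase r r'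

/-- irreducible non-values in the hole position of a reduction context -/
def Atom (e : Exp S) : Prop :=
  (∃ k, e = .var k) ∨
  (∃ T c args t, e = .app (.constr T c args) t) ∨
  (∃ T sc alts, e = .caseE T sc alts ∧ isValue sc ∧
    ∀ (c : S.CName T) (args : Fin (S.arity T c) → Exp S), sc ≠ .constr T c args)

/-- heads: redexes or atoms -/
def Head (e : Exp S) : Prop := isRedex e ∨ Atom e

theorem head_not_value {r : Exp S} (h : Head r) : ¬ isValue r := by
  rcases h with ⟨r', hb⟩ | hatom
  · cases hb <;> simp [isValue]
  · rcases hatom with ⟨k, rfl⟩ | ⟨T, c, args, t, rfl⟩ | ⟨T, sc, alts, rfl, _, _⟩ <;>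
      simp [isValue]

theorem head_app {u t : Exp S} (h : Head (.app u t)) : isValue u := by
  rcases h with ⟨r', hb⟩ | hatom
  · cases hb; simp [isValue]
  · rcases hatom with ⟨k, hk⟩ | ⟨T, c, args, t', heq⟩ | ⟨T, sc, alts, heq, _, _⟩
    · exact absurd hk (by simp)
    · injection heq with h1 h2; subst h1; simp [isValue]
    · exact absurd heq (by simp)

theorem head_seq {u t : Exp S} (h : Head (.seqE u t)) : isValue u := by
  rcases h with ⟨r', hb⟩ | hatom
  · cases hb; assumption
  · rcases hatom with ⟨k, hk⟩ | ⟨T, c, args, t', heq⟩ | ⟨T, sc, alts, heq, _, _⟩ <;>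
      first
      | exact absurd hk (by simp)
      | exact absurd heq (by simp)

theorem head_case {T : S.TyName} {sc : Exp S} {alts : (c : S.CName T) → Exp S}
    (h : Head (.caseE T sc alts)) : isValue sc := by
  rcases h with ⟨r', hb⟩ | hatom
  · cases hb; simp [isValue]
  · rcases hatom with ⟨k, hk⟩ | ⟨T', c, args, t', heq⟩ | ⟨T', sc', alts', heq, hv, _⟩
    · exact absurd hk (by simp)
    · exact absurd heq (by simp)
    · injection heq with h1 h2 h3
      subst h1
      first
        | (rw [h2]; exact hv)
        | (rw [eq_of_heq h2]; exact hv)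

theorem headDecomp :
    ∀ (A A' : ACtx S) {r r' : Exp S}, plugA A r = plugA A' r' → Head r → Head r' →
      A = A' ∧ r = r' := by
  intro A
  induction A with
  | hole =>
      intro A' r r' heq hr hr'
      cases A' with
      | hole => exact ⟨rfl, heq⟩
      | appA B t =>
          exfalso
          have heq' : r = .app (plugA B r') t := heq
          have hv : isValue (plugA B r') := head_app (heq' ▸ hr)
          have hB : B = .hole := plugA_value hv
          subst hB
          exact head_not_value hr' hv
      | seqA B t =>
          exfalso
          have heq' : r = .seqE (plugA B r') t := heq
          have hv : isValue (plugA B r') := head_seq (heq' ▸ hr)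
          have hB : B = .hole := plugA_value hv
          subst hB
          exact head_not_value hr' hv
      | caseA T B alts =>
          exfalso
          have heq' : r = .caseE T (plugA B r') alts := heq
          have hv : isValue (plugA B r') := head_case (heq' ▸ hr)
          have hB : B = .hole := plugA_value hv
          subst hB
          exact head_not_value hr' hv
  | appA B t ih =>
      intro A' r r' heq hr hr'
      cases A' with
      | hole =>
          exfalso
          have heq' : r' = .app (plugA B r) t := heq.symm
          have hv : isValue (plugA B r) := head_app (heq' ▸ hr')
          have hB : B = .hole := plugA_value hv
          subst hB
          exact head_not_value hr hv
      | appA B' t' =>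
          simp only [plugA] at heq
          injection heq with h1 h2
          obtain ⟨hA, hrr⟩ := ih B' h1 hr hr'
          subst hA; subst h2; subst hrr
          exact ⟨rfl, rfl⟩
      | seqA B' t' => exact absurd heq (by simp [plugA])
      | caseA T' B' alts' => exact absurd heq (by simp [plugA])
  | seqA B t ih =>
      intro A' r r' heq hr hr'
      cases A' with
      | hole =>
          exfalso
          have heq' : r' = .seqE (plugA B r) t := heq.symm
          have hv : isValue (plugA B r) := head_seq (heq' ▸ hr')
          have hB : B = .hole := plugA_value hv
          subst hB
          exact head_not_value hr hv
      | appA B' t' => exact absurd heq (by simp [plugA])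
      | seqA B' t' =>
          simp only [plugA] at heq
          injection heq with h1 h2
          obtain ⟨hA, hrr⟩ := ih B' h1 hr hr'
          subst hA; subst h2; subst hrr
          exact ⟨rfl, rfl⟩
      | caseA T' B' alts' => exact absurd heq (by simp [plugA])
  | caseA T B alts ih =>
      intro A' r r' heq hr hr'
      cases A' with
      | hole =>
          exfalso
          have heq' : r' = .caseE T (plugA B r) alts := heq.symm
          have hv : isValue (plugA B r) := head_case (heq' ▸ hr')
          have hB : B = .hole := plugA_value hv
          subst hB
          exact head_not_value hr hv
      | appA B' t' => exact absurd heq (by simp [plugA])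
      | seqA B' t' => exact absurd heq (by simp [plugA])
      | caseA T' B' alts' =>
          simp only [plugA] at heq
          injection heq with h1 h2 h3
          subst h1
          have h2' : plugA B r = plugA B' r' := by
            first | exact h2 | exact eq_of_heq h2
          have h3' : alts = alts' := by
            first | exact h3 | exact eq_of_heq h3
          subst h3'
          obtain ⟨hA, hrr⟩ := ih B' h2' hr hr'
          subst hA; subst hrr
          exact ⟨rfl, rfl⟩

theorem base_det {r a b : Exp S} (h1 : LccBase r a) (h2 : LccBase r b) : a = b := by
  cases h1 with
  | nbeta => cases h2; rfl
  | nseq hv => cases h2; rfl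
  | ncase => cases h2; rfl

theorem step_det {a b c : Exp S} (h1 : lccStep a b) (h2 : lccStep a c) : b = c := by
  obtain ⟨A, r, r', hb, rfl, rfl⟩ := h1
  obtain ⟨A2, r2, r2', hb2, heq, rfl⟩ := h2
  obtain ⟨hA, hr⟩ := headDecomp A A2 heq (Or.inl ⟨_, hb⟩) (Or.inl ⟨_, hb2⟩)
  subst hA; subst hr
  rw [base_det hb hb2]

theorem value_no_step {v x : Exp S} (hv : isValue v) (h : lccStep v x) : False := by
  obtain ⟨A, r, r', hb, heq, rfl⟩ := h
  have hA : A = .hole := plugA_value (heq ▸ hv)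
  subst hA
  have heq' : v = r := heq
  exact head_not_value (Or.inl ⟨_, hb⟩) (heq' ▸ hv)

theorem atom_not_redex {r : Exp S} (ha : Atom r) (hr : isRedex r) : False := by
  obtain ⟨r', hb⟩ := hr
  rcases ha with ⟨k, rfl⟩ | ⟨T, c, args, t, rfl⟩ | ⟨T, sc, alts, rfl, hv, hne⟩
  · cases hb
  · cases hb
  · cases hb with
    | ncase => exact hne _ _ rfl
    | _ => skip

theorem no_step_atom {r x : Exp S} {A : ACtx S} (ha : Atom r) (h : lccStep (plugA A r) x) :
    False := by
  obtain ⟨A2, r2, r2', hb, heq, rfl⟩ := h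
  obtain ⟨hA, hr⟩ := headDecomp A A2 heq (Or.inr ha) (Or.inl ⟨_, hb⟩)
  subst hr
  exact atom_not_redex ha ⟨_, hb⟩

theorem atom_not_value {r : Exp S} (ha : Atom r) : ¬ isValue r :=
  head_not_value (Or.inr ha)

end Core

/-! ### Auxiliary development: counted reduction, progress, convergence -/

namespace Core

variable {S : Sig}

/-- `n`-step normal-order reduction -/
inductive StepN : ℕ → Exp S → Exp S → Prop
  | refl (e) : StepN 0 e e
  | head {n a b c} : lccStep a b → StepN n b c → StepN (n+1) a c

theorem stepN_rtg {n : ℕ} {a b : Exp S} (h : StepN n a b) :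
    Relation.ReflTransGen lccStep a b := by
  induction h with
  | refl => exact Relation.ReflTransGen.refl
  | head hs _ ih => exact Relation.ReflTransGen.head hs ih

theorem rtg_stepN {a b : Exp S} (h : Relation.ReflTransGen lccStep a b) :
    ∃ n, StepN n a b := by
  induction h using Relation.ReflTransGen.head_induction_on with
  | refl => exact ⟨0, StepN.refl b⟩
  | head hs _ ih =>
      obtain ⟨n, hn⟩ := ih
      exact ⟨n+1, StepN.head hs hn⟩

theorem stepN_trans {n m : ℕ} {a b c : Exp S} (h1 : StepN n a b) (h2 : StepN m b c) :
    StepN (n + m) a c := by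
  induction h1 with
  | refl => simpa using h2
  | head hs _ ih =>
      rw [Nat.add_right_comm]
      exact StepN.head hs (ih h2)

theorem stepN_forced {n : ℕ} {a v b : Exp S} (h : StepN n a v) (hv : isValue v)
    (hs : lccStep a b) : ∃ m, n = m + 1 ∧ StepN m b v := by
  cases h with
  | refl => exact absurd hs (fun hh => value_no_step hv hh)
  | head hs' hrest =>
      rw [step_det hs hs']
      exact ⟨_, rfl, hrest⟩

theorem stepN_value {n : ℕ} {v b : Exp S} (hv : isValue v) (h : StepN n v b) :
    n = 0 ∧ b = v := by
  cases h with
  | refl => exact ⟨rfl, rfl⟩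
  | head hs _ => exact absurd hs (fun hh => value_no_step hv hh)

theorem lccStep_plugA {a b : Exp S} (A : ACtx S) (h : lccStep a b) :
    lccStep (plugA A a) (plugA A b) := by
  obtain ⟨B, r, r', hb, rfl, rfl⟩ := h
  exact ⟨compA A B, r, r', hb, (plugA_compA A B r).symm, (plugA_compA A B r').symm⟩

theorem stepN_plugA {n : ℕ} {a b : Exp S} (A : ACtx S) (h : StepN n a b) :
    StepN n (plugA A a) (plugA A b) := by
  induction h with
  | refl => exact StepN.refl _
  | head hs _ ih => exact StepN.head (lccStep_plugA A hs) ih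

theorem stepN_atom_absurd {n : ℕ} {r v : Exp S} {A : ACtx S} (ha : Atom r)
    (h : StepN n (plugA A r) v) (hv : isValue v) : False := by
  cases h with
  | refl =>
      have hA : A = .hole := plugA_value hv
      subst hA
      exact atom_not_value ha hv
  | head hs _ => exact no_step_atom ha hs

/-- normal-order progress for letrec-free expressions -/
theorem trichotomy {e : Exp S} (he : lfree e) :
    isValue e ∨
    (∃ A r r', LccBase r r' ∧ e = plugA A r) ∨
    (∃ A r, Atom r ∧ e = plugA A r) := by
  induction e with
  | var k => exact Or.inr (Or.inr ⟨.hole, _, Or.inl ⟨k, rfl⟩, rfl⟩)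
  | app u v ihu ihv =>
      rcases ihu he.1 with hv | ⟨A, r, r', hb, rfl⟩ | ⟨A, r, ha, rfl⟩
      · rcases value_cases hv with ⟨w, rfl⟩ | ⟨T, c, args, rfl⟩
        · exact Or.inr (Or.inl ⟨.hole, _, _, LccBase.nbeta, rfl⟩)
        · exact Or.inr (Or.inr ⟨.hole, _, Or.inr (Or.inl ⟨T, c, args, v, rfl⟩), rfl⟩)
      · exact Or.inr (Or.inl ⟨.appA A v, r, r', hb, rfl⟩)
      · exact Or.inr (Or.inr ⟨.appA A v, r, ha, rfl⟩)
  | lam u ih => exact Or.inl (by simp [isValue])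
  | constr T c args ih => exact Or.inl (by simp [isValue])
  | seqE u v ihu ihv =>
      rcases ihu he.1 with hv | ⟨A, r, r', hb, rfl⟩ | ⟨A, r, ha, rfl⟩
      · exact Or.inr (Or.inl ⟨.hole, _, _, LccBase.nseq hv, rfl⟩)
      · exact Or.inr (Or.inl ⟨.seqA A v, r, r', hb, rfl⟩)
      · exact Or.inr (Or.inr ⟨.seqA A v, r, ha, rfl⟩)
  | caseE T sc alts ihsc ihalts =>
      rcases ihsc he.1 with hv | ⟨A, r, r', hb, rfl⟩ | ⟨A, r, ha, rfl⟩
      · rcases value_cases hv with ⟨w, rfl⟩ | ⟨T', c, args, rfl⟩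
        · refine Or.inr (Or.inr ⟨.hole, _, Or.inr (Or.inr ⟨T, .lam w, alts, rfl, hv, ?_⟩), rfl⟩)
          intro c args h
          cases h
        · by_cases hT : T' = T
          · subst hT
            exact Or.inr (Or.inl ⟨.hole, _, _, LccBase.ncase, rfl⟩)
          · refine Or.inr (Or.inr ⟨.hole, _,
              Or.inr (Or.inr ⟨T, _, alts, rfl, hv, ?_⟩), rfl⟩)
            intro c' args' h
            injection h with h1 _ _
            exact hT h1
      · exact Or.inr (Or.inl ⟨.caseA T A alts, r, r', hb, rfl⟩)
      · exact Or.inr (Or.inr ⟨.caseA T A alts, r, ha, rfl⟩)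
  | letrecE n b t ihb iht => exact absurd he id

theorem subst_consSub (σ : ℕ → Exp S) (t u : Exp S) :
    subst σ (subst (consSub t) u) = subst (consSub (subst σ t)) (subst (upN 1 σ) u) := by
  rw [subst_subst, subst_subst]
  apply subst_ext
  intro k
  cases k with
  | zero => rfl
  | succ k =>
      show subst σ (.var k) = subst (consSub (subst σ t)) (upN 1 σ (k+1))
      have h1 : ¬ (k + 1 < 1) := by omega
      have : upN 1 σ (k+1) = rename (· + 1) (σ k) := by
        simp only [upN, if_neg h1, Nat.add_sub_cancel]
      rw [this, subst_rename]
      show σ k = subst (fun j => consSub (subst σ t) (j + 1)) (σ k)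
      rw [subst_ext (σ := fun j => consSub (subst σ t) (j + 1)) (τ := Exp.var)
        (fun j => rfl) (σ k), subst_var]

theorem subst_instSub {m : ℕ} (σ : ℕ → Exp S) (args : Fin m → Exp S) (e : Exp S) :
    subst σ (subst (instSub args) e) =
      subst (instSub (fun i => subst σ (args i))) (subst (upN m σ) e) := by
  rw [subst_subst, subst_subst]
  apply subst_ext
  intro k
  by_cases h : k < m
  · have e1 : instSub args k = args ⟨k, h⟩ := dif_pos h
    have e2 : upN m σ k = Exp.var k := if_pos h
    rw [e1, e2]
    show subst σ (args ⟨k, h⟩) = instSub (fun i => subst σ (args i)) k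
    rw [show instSub (fun i => subst σ (args i)) k = subst σ (args ⟨k, h⟩) from dif_pos h]
  · have e1 : instSub args k = Exp.var (k - m) := dif_neg h
    have e2 : upN m σ k = rename (· + m) (σ (k - m)) := if_neg h
    rw [e1, e2, subst_rename]
    have e3 : ∀ j, instSub (fun i => subst σ (args i)) (j + m) = Exp.var (S := S) j := by
      intro j
      have h2 : ¬ (j + m < m) := by omega
      rw [show instSub (fun i => subst σ (args i)) (j+m) = Exp.var (j+m-m) from dif_neg h2]
      congr 1
      omega
    rw [subst_ext e3, subst_var]
    rfl

theorem base_subst {r r' : Exp S} (σ : ℕ → Exp S) (h : LccBase r r') :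
    LccBase (subst σ r) (subst σ r') := by
  cases h with
  | nbeta =>
      rw [subst_consSub]
      exact LccBase.nbeta
  | nseq hv =>
      exact LccBase.nseq (isValue_subst hv σ)
  | ncase =>
      rw [subst_instSub]
      exact LccBase.ncase

theorem lccStep_subst {a b : Exp S} (σ : ℕ → Exp S) (h : lccStep a b) :
    lccStep (subst σ a) (subst σ b) := by
  obtain ⟨A, r, r', hb, rfl, rfl⟩ := h
  rw [subst_plugA, subst_plugA]
  exact ⟨substA σ A, _, _, base_subst σ hb, rfl, rfl⟩

theorem stepN_subst {n : ℕ} {a b : Exp S} (σ : ℕ → Exp S) (h : StepN n a b) :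
    StepN n (subst σ a) (subst σ b) := by
  induction h with
  | refl => exact StepN.refl _
  | head hs _ ih => exact StepN.head (lccStep_subst σ hs) ih

theorem conv_subst {e : Exp S} (σ : ℕ → Exp S) (h : lccConv e) : lccConv (subst σ e) := by
  obtain ⟨v, hrtg, hv⟩ := h
  obtain ⟨n, hn⟩ := rtg_stepN hrtg
  exact ⟨subst σ v, stepN_rtg (stepN_subst σ hn), isValue_subst hv σ⟩

theorem conv_back_rtg {a b : Exp S} (h : Relation.ReflTransGen lccStep a b)
    (hc : lccConv b) : lccConv a := by
  obtain ⟨v, hrtg, hv⟩ := hc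
  exact ⟨v, h.trans hrtg, hv⟩

theorem conv_back_step {a b : Exp S} (h : lccStep a b) (hc : lccConv b) : lccConv a :=
  conv_back_rtg (Relation.ReflTransGen.single h) hc

theorem conv_forward_step {a b : Exp S} (hc : lccConv a) (h : lccStep a b) : lccConv b := by
  obtain ⟨v, hrtg, hv⟩ := hc
  obtain ⟨n, hn⟩ := rtg_stepN hrtg
  obtain ⟨m, _, hm⟩ := stepN_forced hn hv h
  exact ⟨v, stepN_rtg hm, hv⟩

theorem conv_forward_rtg {a b : Exp S} (hc : lccConv a)
    (h : Relation.ReflTransGen lccStep a b) : lccConv b := by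
  induction h with
  | refl => exact hc
  | tail _ hs ih => exact conv_forward_step ih hs

theorem value_conv {v : Exp S} (hv : isValue v) : lccConv v :=
  ⟨v, Relation.ReflTransGen.refl, hv⟩

theorem no_conv_loop {e : Exp S} (h : lccStep e e) : ¬ lccConv e := by
  rintro ⟨v, hrtg, hv⟩
  obtain ⟨n, hn⟩ := rtg_stepN hrtg
  clear hrtg
  induction n using Nat.strong_induction_on generalizing e with
  | _ n ih =>
      obtain ⟨m, hm1, hm2⟩ := stepN_forced hn hv h
      exact ih m (by omega) h hm2

theorem omega_step : lccStep (Omega : Exp S) Omega := by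
  refine ⟨.hole, Omega, Omega, ?_, rfl, rfl⟩
  have : (Omega : Exp S) =
      subst (consSub (.lam (.app (.var 0) (.var 0)))) (.app (.var 0) (.var 0)) := rfl
  nth_rewrite 2 [this]
  exact LccBase.nbeta

theorem not_conv_plugA_Omega (A : ACtx S) : ¬ lccConv (plugA A Omega) :=
  no_conv_loop (lccStep_plugA A omega_step)

theorem base_closedUnder {d : ℕ} {r r' : Exp S} (h : LccBase r r') (hc : closedUnder d r) :
    closedUnder d r' := by
  cases h with
  | nbeta =>
      have h1 : closedUnder (d + 1) _ := hc.1
      refine closedUnder_subst h1 (fun k hk => ?_)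
      cases k with
      | zero => exact hc.2
      | succ k =>
          show k < d
          omega
  | nseq hv => exact hc.2
  | @ncase T c args alts =>
      refine closedUnder_subst (hc.2 c) (fun k hk => ?_)
      by_cases h2 : k < S.arity T c
      · rw [show instSub args k = args ⟨k, h2⟩ from dif_pos h2]
        exact hc.1 _
      · rw [show instSub args k = Exp.var (k - S.arity T c) from dif_neg h2]
        show k - S.arity T c < d
        omega

theorem base_lfree {r r' : Exp S} (h : LccBase r r') (hl : lfree r) : lfree r' := by
  cases h with
  | nbeta =>
      refine lfree_subst hl.1 (fun k => ?_)
      cases k with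
      | zero => exact hl.2
      | succ k => trivial
  | nseq hv => exact hl.2
  | @ncase T c args alts =>
      refine lfree_subst (hl.2 c) (fun k => ?_)
      by_cases h2 : k < S.arity T c
      · rw [show instSub args k = args ⟨k, h2⟩ from dif_pos h2]
        exact hl.1 _
      · rw [show instSub args k = Exp.var (k - S.arity T c) from dif_neg h2]
        trivial

theorem step_closed {a b : Exp S} (h : lccStep a b) (hc : closed a) : closed b := by
  obtain ⟨A, r, r', hb, rfl, rfl⟩ := h
  have hc' : closedUnder 0 (plugA A r) := hc
  rw [closedUnder_plugA] at hc'
  show closedUnder 0 (plugA A r')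
  rw [closedUnder_plugA]
  exact ⟨hc'.1, base_closedUnder hb hc'.2⟩

theorem step_lfree {a b : Exp S} (h : lccStep a b) (hc : lfree a) : lfree b := by
  obtain ⟨A, r, r', hb, rfl, rfl⟩ := h
  rw [lfree_plugA] at hc ⊢
  exact ⟨hc.1, base_lfree hb hc.2⟩

theorem stepN_closed {n : ℕ} {a b : Exp S} (h : StepN n a b) (hc : closed a) : closed b := by
  induction h with
  | refl => exact hc
  | head hs _ ih => exact ih (step_closed hs hc)

theorem stepN_lfree {n : ℕ} {a b : Exp S} (h : StepN n a b) (hc : lfree a) : lfree b := by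
  induction h with
  | refl => exact hc
  | head hs _ ih => exact ih (step_lfree hs hc)

theorem convTo_closed {a v : Exp S} (h : lccConvTo a v) (hc : closed a) : closed v := by
  obtain ⟨n, hn⟩ := rtg_stepN h.1
  exact stepN_closed hn hc

theorem convTo_lfree {a v : Exp S} (h : lccConvTo a v) (hc : lfree a) : lfree v := by
  obtain ⟨n, hn⟩ := rtg_stepN h.1
  exact stepN_lfree hn hc

/-- evaluation in a reduction context factors through evaluation of the filled expression -/
theorem evalA {v : Exp S} :
    ∀ (n : ℕ) (s : Exp S) (A : ACtx S), StepN n (plugA A s) v → isValue v → lfree s →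
      ∃ k m w, k + m = n ∧ StepN k s w ∧ isValue w ∧ StepN m (plugA A w) v := by
  intro n
  induction n using Nat.strong_induction_on with
  | _ n ih =>
      intro s A hsn hv hl
      by_cases hvs : isValue s
      · exact ⟨0, n, s, by omega, StepN.refl s, hvs, hsn⟩
      rcases trichotomy hl with h | ⟨B, r, r', hb, rfl⟩ | ⟨B, r, ha, rfl⟩
      · exact absurd h hvs
      · have hstep : lccStep (plugA B r) (plugA B r') := ⟨B, r, r', hb, rfl, rfl⟩
        obtain ⟨m, rfl, hm⟩ := stepN_forced hsn hv (lccStep_plugA A hstep)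
        obtain ⟨k2, m2, w, harith, hk2, hw, hm2⟩ :=
          ih m (by omega) (plugA B r') A hm hv (step_lfree hstep hl)
        exact ⟨k2 + 1, m2, w, by omega, StepN.head hstep hk2, hw, hm2⟩
      · rw [← plugA_compA] at hsn
        exact absurd (stepN_atom_absurd ha hsn hv) (fun h => h)

end Core

/-! ### Auxiliary development: Omega-closure reflection, similarity basics -/

namespace Core

variable {S : Sig}

theorem atom_subst {r : Exp S} (σ : ℕ → Exp S) (ha : Atom r) :
    (∃ k, r = .var k) ∨ Atom (subst σ r) := by
  rcases ha with ⟨k, rfl⟩ | ⟨T, c, args, t, rfl⟩ | ⟨T, sc, alts, rfl, hv, hne⟩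
  · exact Or.inl ⟨k, rfl⟩
  · exact Or.inr (Or.inr (Or.inl ⟨T, c, fun i => subst σ (args i), subst σ t, rfl⟩))
  · refine Or.inr (Or.inr (Or.inr ⟨T, subst σ sc, _, rfl, isValue_subst hv σ, ?_⟩))
    intro c args h
    rcases value_cases hv with ⟨u, rfl⟩ | ⟨T', c', args', rfl⟩
    · have h2 : Exp.lam (subst (upN 1 σ) u) = .constr T c args := h
      cases h2
    · have h' : Exp.constr T' c' (fun i => subst σ (args' i)) = .constr T c args := h
      injection h' with h1 _ _
      subst h1
      exact hne c' args' rfl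

theorem conv_subst_reflect {e : Exp S} (hl : lfree e)
    (h : lccConv (subst (fun _ => Omega) e)) : lccConv e := by
  by_contra hne
  obtain ⟨v, hrtg, hv⟩ := h
  obtain ⟨n, hn⟩ := rtg_stepN hrtg
  clear hrtg
  induction n using Nat.strong_induction_on generalizing e with
  | _ n ih =>
      rcases trichotomy hl with hval | ⟨A, r, r', hb, rfl⟩ | ⟨A, r, ha, rfl⟩
      · exact hne (value_conv hval)
      · have hstep : lccStep (plugA A r) (plugA A r') := ⟨A, r, r', hb, rfl, rfl⟩
        obtain ⟨m, rfl, hm⟩ := stepN_forced hn hv (lccStep_subst _ hstep)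
        exact ih m (by omega) (step_lfree hstep hl)
          (fun hc => hne (conv_back_step hstep hc)) hm
      · rw [subst_plugA] at hn
        rcases atom_subst (fun _ => Omega) ha with ⟨k, rfl⟩ | ha'
        · exact not_conv_plugA_Omega (substA (fun _ => Omega) A)
            ⟨v, stepN_rtg hn, hv⟩
        · exact stepN_atom_absurd ha' hn hv

theorem Flcc_mono {η η' : Exp S → Exp S → Prop} (h : ∀ a b, η a b → η' a b) {s t : Exp S}
    (hF : Flcc η s t) : Flcc η' s t := by
  constructor
  · intro s' hs'
    rcases hF.1 s' hs' with ⟨t', ht', hopen⟩ | hr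
    · exact Or.inl ⟨t', ht', fun σ hσ h1 h2 => h _ _ (hopen σ hσ h1 h2)⟩
    · exact Or.inr hr
  · intro T c args hconv
    obtain ⟨targs, ht, hargs⟩ := hF.2 T c args hconv
    exact ⟨targs, ht, fun i => h _ _ (hargs i)⟩

theorem sim_postfix {s t : Exp S} (h : simLcc s t) : Flcc simLcc s t := by
  obtain ⟨η, hpost, hst⟩ := h
  exact Flcc_mono (fun a b hab => ⟨η, hpost, hab⟩) (hpost _ _ hst)

theorem sim_coind {η : Exp S → Exp S → Prop} (hpost : ∀ a b, η a b → Flcc η a b)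
    {a b : Exp S} (h : η a b) : simLcc a b := ⟨η, hpost, h⟩

theorem sim_refl (a : Exp S) : simLcc a a := by
  refine ⟨Eq, ?_, rfl⟩
  rintro x y rfl
  constructor
  · intro s' hs'
    exact Or.inl ⟨s', hs', fun σ _ _ _ => rfl⟩
  · intro T c args h
    exact ⟨args, h, fun i => rfl⟩

theorem sim_conv {x y : Exp S} (h : simLcc x y) (hc : lccConv x) : lccConv y := by
  obtain ⟨v, hrtg, hv⟩ := hc
  have F := sim_postfix h
  rcases value_cases hv with ⟨u, rfl⟩ | ⟨T, c, args, rfl⟩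
  · rcases F.1 u ⟨hrtg, hv⟩ with ⟨t', ht', _⟩ | ⟨T, c, targs, ht', _⟩
    · exact ⟨_, ht'.1, ht'.2⟩
    · exact ⟨_, ht'.1, ht'.2⟩
  · obtain ⟨targs, ht', _⟩ := F.2 T c args ⟨hrtg, hv⟩
    exact ⟨_, ht'.1, ht'.2⟩

theorem sim_trans {a b c : Exp S} (h1 : simLcc a b) (h2 : simLcc b c) : simLcc a c := by
  refine sim_coind (η := fun x z => ∃ y, simLcc x y ∧ simLcc y z) ?_ ⟨b, h1, h2⟩
  rintro x z ⟨y, hxy, hyz⟩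
  have F1 := sim_postfix hxy
  have F2 := sim_postfix hyz
  constructor
  · intro s' hs'
    rcases F1.1 s' hs' with ⟨t', ht', hopen⟩ | ⟨T, c, targs, ht', hbot⟩
    · rcases F2.1 t' ht' with ⟨u', hu', hopen2⟩ | ⟨T, c, uargs, hu', hbot2⟩
      · refine Or.inl ⟨u', hu', ?_⟩
        intro σ hσ hc1 hc2
        have e1 : subst σ s' = subst (patchS σ) s' := subst_patch hc1
        have e2 : subst σ u' = subst (patchS σ) u' := subst_patch hc2
        rw [e1, e2]
        refine ⟨subst (patchS σ) t',
          hopen (patchS σ) (patchS_lfree hσ) (by rw [← e1]; exact hc1)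
            (closed_subst_all (patchS_closed σ) t'), ?_⟩
        exact hopen2 (patchS σ) (patchS_lfree hσ)
          (closed_subst_all (patchS_closed σ) t') (by rw [← e2]; exact hc2)
      · refine Or.inr ⟨T, c, uargs, hu', ?_⟩
        intro σ hσ hcl hconv
        have e1 : subst σ s' = subst (patchS σ) s' := subst_patch hcl
        have hsim := hopen (patchS σ) (patchS_lfree hσ) (by rw [← e1]; exact hcl)
          (closed_subst_all (patchS_closed σ) t')
        rw [e1] at hconv
        exact hbot2 (patchS σ) (patchS_lfree hσ)
          (closed_subst_all (patchS_closed σ) t') (sim_conv hsim hconv)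
    · obtain ⟨uargs, hu', _⟩ := F2.2 T c targs ht'
      exact Or.inr ⟨T, c, uargs, hu', hbot⟩
  · intro T c args hc
    obtain ⟨targs, ht', hsim1⟩ := F1.2 T c args hc
    obtain ⟨uargs, hu', hsim2⟩ := F2.2 T c targs ht'
    exact ⟨uargs, hu', fun i => ⟨targs i, hsim1 i, hsim2 i⟩⟩

theorem openL_subst {R : Exp S → Exp S → Prop} {a b : Exp S} (h : openL R a b)
    {ρ : ℕ → Exp S} (hρ : ∀ k, lfree (ρ k)) : openL R (subst ρ a) (subst ρ b) := by
  intro σ hσ h1 h2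
  rw [subst_subst σ ρ a] at h1 ⊢
  rw [subst_subst σ ρ b] at h2 ⊢
  exact h _ (fun k => lfree_subst (hρ k) hσ) h1 h2

theorem openL_sim_refl (a : Exp S) : openL simLcc a a :=
  fun σ _ _ _ => sim_refl _

theorem openL_sim_trans {a b c : Exp S} (h1 : openL simLcc a b) (h2 : openL simLcc b c) :
    openL simLcc a c := by
  intro σ hσ hc1 hc2
  have e1 : subst σ a = subst (patchS σ) a := subst_patch hc1
  have e2 : subst σ c = subst (patchS σ) c := subst_patch hc2
  rw [e1, e2]
  exact sim_trans
    (h1 (patchS σ) (patchS_lfree hσ) (by rw [← e1]; exact hc1)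
      (closed_subst_all (patchS_closed σ) b))
    (h2 (patchS σ) (patchS_lfree hσ) (closed_subst_all (patchS_closed σ) b)
      (by rw [← e2]; exact hc2))

theorem sim_of_closed {a b : Exp S} (h : simLcc a b) (ha : closed a) (hb : closed b) :
    openL simLcc a b := by
  intro σ _ _ _
  rw [subst_closed ha, subst_closed hb]
  exact h

end Core

/-! ### Auxiliary development: multi-beta contexts and finite approximation -/

namespace Core

variable {S : Sig}

/-- the substitution `σ` cut off at `d`: variables `≥ d` are shifted down -/
def pad (σ : ℕ → Exp S) (d : ℕ) : ℕ → Exp S := fun k => if k < d then σ k else .var (k - d)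

/-- iterated abstraction -/
def lamN' : ℕ → Exp S → Exp S
  | 0, e => e
  | d+1, e => .lam (lamN' d e)

/-- iterated application to `σ (d-1), …, σ 0` -/
def appStackE (σ : ℕ → Exp S) : ℕ → Exp S → Exp S
  | 0, X => X
  | d+1, X => appStackE σ d (.app X (σ d))

theorem appStackE_step (σ : ℕ → Exp S) (d : ℕ) {x y : Exp S} (h : lccStep x y) :
    lccStep (appStackE σ d x) (appStackE σ d y) := by
  induction d generalizing x y with
  | zero => exact h
  | succ d ih =>
      exact ih (lccStep_plugA (.appA .hole (σ d)) h)

theorem appStackE_rtg (σ : ℕ → Exp S) (d : ℕ) {x y : Exp S}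
    (h : Relation.ReflTransGen lccStep x y) :
    Relation.ReflTransGen lccStep (appStackE σ d x) (appStackE σ d y) := by
  induction h with
  | refl => exact Relation.ReflTransGen.refl
  | tail _ hs ih => exact ih.tail (appStackE_step σ d hs)

theorem subst_lamN' (τ : ℕ → Exp S) (d : ℕ) (e : Exp S) :
    subst τ (lamN' d e) = lamN' d (subst (upN d τ) e) := by
  induction d generalizing τ with
  | zero => rw [upN_zero]; rfl
  | succ d ih =>
      show Exp.lam (subst (upN 1 τ) (lamN' d e)) = .lam (lamN' d (subst (upN (d+1) τ) e))
      rw [ih, upN_add]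

theorem pad_zero (σ : ℕ → Exp S) (e : Exp S) : subst (pad σ 0) e = e := by
  rw [subst_ext (τ := Exp.var) (fun k => by simp [pad]), subst_var]

theorem pad_succ {σ : ℕ → Exp S} (hσ : ∀ k, closed (σ k)) (d : ℕ) (e : Exp S) :
    subst (pad σ d) (subst (upN d (consSub (σ d))) e) = subst (pad σ (d+1)) e := by
  rw [subst_subst]
  apply subst_ext
  intro k
  by_cases h1 : k < d
  · have e1 : upN d (consSub (σ d)) k = .var k := if_pos h1
    rw [e1]
    show pad σ d k = pad σ (d+1) k
    simp only [pad, if_pos h1, if_pos (by omega : k < d + 1)]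
  · have e1 : upN d (consSub (σ d)) k = rename (· + d) (consSub (σ d) (k - d)) := if_neg h1
    rw [e1]
    rcases Nat.eq_or_lt_of_le (Nat.le_of_not_lt h1) with heq | hlt
    · have e2 : k - d = 0 := by omega
      rw [e2]
      show subst (pad σ d) (rename (· + d) (σ d)) = pad σ (d+1) k
      rw [rename_closed (hσ d), subst_closed (hσ d)]
      have : pad σ (d+1) k = σ k := if_pos (by omega)
      rw [this, ← heq]
    · have e2 : k - d = (k - d - 1) + 1 := by omega
      rw [e2]
      show subst (pad σ d) (rename (· + d) (.var (k - d - 1))) = pad σ (d+1) k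
      show subst (pad σ d) (.var (k - d - 1 + d)) = pad σ (d+1) k
      show pad σ d (k - d - 1 + d) = pad σ (d+1) k
      simp only [pad, if_neg (show ¬ (k - d - 1 + d < d) by omega),
        if_neg (show ¬ (k < d + 1) by omega)]
      congr 1
      omega

theorem multiBeta {σ : ℕ → Exp S} (hσ : ∀ k, closed (σ k)) (d : ℕ) (e : Exp S) :
    Relation.ReflTransGen lccStep (appStackE σ d (lamN' d e)) (subst (pad σ d) e) := by
  induction d generalizing e with
  | zero => rw [pad_zero]; exact Relation.ReflTransGen.refl
  | succ d ih =>
      show Relation.ReflTransGen lccStep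
        (appStackE σ d (.app (.lam (lamN' d e)) (σ d))) _
      have hstep : lccStep (Exp.app (.lam (lamN' d e)) (σ d))
          (subst (consSub (σ d)) (lamN' d e)) :=
        ⟨.hole, _, _, LccBase.nbeta, rfl, rfl⟩
      refine Relation.ReflTransGen.head (appStackE_step σ d hstep) ?_
      rw [subst_lamN']
      have := ih (e := subst (upN d (consSub (σ d))) e)
      rwa [pad_succ hσ d e] at this

/-- progress for a value plugged into a reduction context -/
theorem trichotomyV (A : ACtx S) (w : Exp S) (hw : isValue w) :
    A = .hole ∨ (∃ B r r', LccBase r r' ∧ plugA A w = plugA B r) ∨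
    (∃ B r, Atom r ∧ (¬ ∃ k, r = Exp.var k) ∧ plugA A w = plugA B r) := by
  induction A with
  | hole => exact Or.inl rfl
  | appA A1 t ih =>
      rcases ih with rfl | ⟨B, r, r', hb, heq⟩ | ⟨B, r, ha, hnv, heq⟩
      · rcases value_cases hw with ⟨u, rfl⟩ | ⟨T, c, args, rfl⟩
        · exact Or.inr (Or.inl ⟨.hole, _, _, LccBase.nbeta, rfl⟩)
        · refine Or.inr (Or.inr ⟨.hole, _, Or.inr (Or.inl ⟨T, c, args, t, rfl⟩), ?_, rfl⟩)
          rintro ⟨k, hk⟩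
          cases hk
      · refine Or.inr (Or.inl ⟨.appA B t, r, r', hb, ?_⟩)
        show Exp.app (plugA A1 w) t = .app (plugA B r) t
        rw [heq]
      · refine Or.inr (Or.inr ⟨.appA B t, r, ha, hnv, ?_⟩)
        show Exp.app (plugA A1 w) t = .app (plugA B r) t
        rw [heq]
  | seqA A1 t ih =>
      rcases ih with rfl | ⟨B, r, r', hb, heq⟩ | ⟨B, r, ha, hnv, heq⟩
      · exact Or.inr (Or.inl ⟨.hole, _, _, LccBase.nseq hw, rfl⟩)
      · refine Or.inr (Or.inl ⟨.seqA B t, r, r', hb, ?_⟩)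
        show Exp.seqE (plugA A1 w) t = .seqE (plugA B r) t
        rw [heq]
      · refine Or.inr (Or.inr ⟨.seqA B t, r, ha, hnv, ?_⟩)
        show Exp.seqE (plugA A1 w) t = .seqE (plugA B r) t
        rw [heq]
  | caseA T A1 alts ih =>
      rcases ih with rfl | ⟨B, r, r', hb, heq⟩ | ⟨B, r, ha, hnv, heq⟩
      · rcases value_cases hw with ⟨u, rfl⟩ | ⟨T', c, args, rfl⟩
        · refine Or.inr (Or.inr ⟨.hole, _,
            Or.inr (Or.inr ⟨T, _, alts, rfl, hw, fun c args h => by cases h⟩), ?_, rfl⟩)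
          rintro ⟨k, hk⟩
          cases hk
        · by_cases hT : T' = T
          · subst hT
            exact Or.inr (Or.inl ⟨.hole, _, _, LccBase.ncase, rfl⟩)
          · refine Or.inr (Or.inr ⟨.hole, _,
              Or.inr (Or.inr ⟨T, _, alts, rfl, hw, ?_⟩), ?_, rfl⟩)
            · intro c' args' h
              injection h with h1 _ _
              exact hT h1
            · rintro ⟨k, hk⟩
              cases hk
      · refine Or.inr (Or.inl ⟨.caseA T B alts, r, r', hb, ?_⟩)
        show Exp.caseE T (plugA A1 w) alts = .caseE T (plugA B r) alts
        rw [heq]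
      · refine Or.inr (Or.inr ⟨.caseA T B alts, r, ha, hnv, ?_⟩)
        show Exp.caseE T (plugA A1 w) alts = .caseE T (plugA B r) alts
        rw [heq]

/-- finite approximation of convergence of a closed instance -/
theorem approx {σ : ℕ → Exp S} (hσc : ∀ k, closed (σ k)) (hσl : ∀ k, lfree (σ k)) :
    ∀ (n : ℕ) (x v : Exp S), lfree x → StepN n (subst σ x) v → isValue v →
      ∃ d0, ∀ d, d0 ≤ d → lccConv (subst (pad σ d) x) := by
  intro n
  induction n using Nat.strong_induction_on with
  | _ n ih =>
      intro x v hl hsn hv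
      rcases trichotomy hl with hval | ⟨A, r, r', hb, rfl⟩ | ⟨A, r, ha, rfl⟩
      · exact ⟨0, fun d _ => value_conv (isValue_subst hval _)⟩
      · have hstep : lccStep (plugA A r) (plugA A r') := ⟨A, r, r', hb, rfl, rfl⟩
        obtain ⟨m, rfl, hm⟩ := stepN_forced hsn hv (lccStep_subst σ hstep)
        obtain ⟨d0, hd0⟩ := ih m (by omega) _ v (step_lfree hstep hl) hm hv
        exact ⟨d0, fun d hd =>
          conv_back_step (lccStep_subst (pad σ d) hstep) (hd0 d hd)⟩
      · rw [subst_plugA] at hsn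
        rcases atom_subst σ ha with ⟨k, rfl⟩ | ha'
        · -- the needed position is a variable
          obtain ⟨k1, m1, w, hsum, hk1, hw, hm1⟩ :=
            evalA n (σ k) (substA σ A) hsn hv (hσl k)
          have hwc : closed w := stepN_closed hk1 (hσc k)
          have hwl : lfree w := stepN_lfree hk1 (hσl k)
          have hlA : lfreeA A ∧ lfree (Exp.var k) := lfree_plugA.mp hl
          have hx'l : lfree (plugA A w) := lfree_plugA.mpr ⟨hlA.1, hwl⟩
          have hsx' : subst σ (plugA A w) = plugA (substA σ A) w := by
            rw [subst_plugA, subst_closed hwc]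
          rcases trichotomyV A w hw with rfl | ⟨B, r, r', hbase, heq⟩ | ⟨B, r, hatom, hnvar, heq⟩
          · refine ⟨k + 1, fun d hd => ?_⟩
            have e1 : subst (pad σ d) (.var k) = σ k := if_pos (by omega)
            rw [show plugA ACtx.hole (Exp.var k) = Exp.var k from rfl, e1]
            exact ⟨w, stepN_rtg hk1, hw⟩
          · have hstep' : lccStep (plugA A w) (plugA B r') := by
              rw [heq]; exact ⟨B, r, r', hbase, rfl, rfl⟩
            have hm1' : StepN m1 (subst σ (plugA A w)) v := by rw [hsx']; exact hm1
            obtain ⟨m2, hm2eq, hm2⟩ := stepN_forced hm1' hv (lccStep_subst σ hstep')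
            obtain ⟨d0, hd0⟩ := ih m2 (by omega) (plugA B r') v (step_lfree hstep' hx'l) hm2 hv
            refine ⟨max d0 (k+1), fun d hd => ?_⟩
            refine conv_back_rtg ?_
              (conv_back_step (lccStep_subst (pad σ d) hstep') (hd0 d (by omega)))
            rw [subst_plugA, subst_plugA, subst_closed hwc]
            have e1 : subst (pad σ d) (.var k) = σ k := if_pos (by omega)
            rw [e1]
            exact stepN_rtg (stepN_plugA _ hk1)
          · have hm1' : StepN m1 (plugA (substA σ B) (subst σ r)) v := by
              rw [← subst_plugA, ← heq, hsx']; exact hm1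
            rcases atom_subst σ hatom with hvar | ha'
            · exact absurd hvar hnvar
            · exact absurd (stepN_atom_absurd ha' hm1' hv) id
        · exact absurd (stepN_atom_absurd ha' hsn hv) id

end Core

/-! ### Auxiliary development: Q-contexts -/

namespace Core

variable {S : Sig}

theorem fapp_mem {r : Exp S} (hl : lfree r) (hc : closed r) :
    (fun e => Exp.app e r) ∈ Qlcc S := Or.inl ⟨r, hl, hc, rfl⟩

theorem caseSel_mem (T : S.TyName) (c : S.CName T) (i : Fin (S.arity T c)) :
    caseSelCtx T c i ∈ Qlcc S := Or.inr (Or.inl ⟨T, c, i, rfl⟩)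

theorem caseTrue_mem (T : S.TyName) (c : S.CName T) :
    caseTrueCtx T c ∈ Qlcc S := Or.inr (Or.inr ⟨T, c, rfl⟩)

theorem trueE_lfree : lfree (trueE : Exp S) := fun _ => trivial

theorem Q_step {f : Exp S → Exp S} (hf : f ∈ Qlcc S) {x y : Exp S} (h : lccStep x y) :
    lccStep (f x) (f y) := by
  rcases hf with ⟨r, hl, hc, rfl⟩ | ⟨T, c, i, rfl⟩ | ⟨T, c, rfl⟩
  · exact lccStep_plugA (.appA .hole r) h
  · exact lccStep_plugA (.caseA T .hole _) h
  · exact lccStep_plugA (.caseA T .hole _) h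

theorem applyAll_step {l : List (Exp S → Exp S)} (hl : ∀ f ∈ l, f ∈ Qlcc S)
    {x y : Exp S} (h : lccStep x y) : lccStep (applyAll l x) (applyAll l y) := by
  induction l with
  | nil => exact h
  | cons f l' ih =>
      exact Q_step (hl f (List.mem_cons_self))
        (ih (fun g hg => hl g (List.mem_cons_of_mem f hg)))

theorem applyAll_rtg {l : List (Exp S → Exp S)} (hl : ∀ f ∈ l, f ∈ Qlcc S)
    {x y : Exp S} (h : Relation.ReflTransGen lccStep x y) :
    Relation.ReflTransGen lccStep (applyAll l x) (applyAll l y) := by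
  induction h with
  | refl => exact Relation.ReflTransGen.refl
  | tail _ hs ih => exact ih.tail (applyAll_step hl hs)

theorem applyAll_append (l : List (Exp S → Exp S)) (f : Exp S → Exp S) (x : Exp S) :
    applyAll (l ++ [f]) x = applyAll l (f x) := by
  simp [applyAll, List.foldr_append]

theorem Q_subst {f : Exp S → Exp S} (hf : f ∈ Qlcc S) (τ : ℕ → Exp S) (x : Exp S) :
    subst τ (f x) = f (subst τ x) := by
  rcases hf with ⟨r, hl, hc, rfl⟩ | ⟨T, c, i, rfl⟩ | ⟨T, c, rfl⟩
  · show Exp.app (subst τ x) (subst τ r) = .app (subst τ x) r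
    rw [subst_closed hc]
  · show Exp.caseE T (subst τ x) _ = .caseE T (subst τ x) _
    congr 1
    funext c'
    show subst (upN (S.arity T c') τ)
        (letI := S.deceq T; if c' = c then (Exp.var (i : ℕ) : Exp S) else Omega) =
      (letI := S.deceq T; if c' = c then (Exp.var (i : ℕ) : Exp S) else Omega)
    by_cases hcc : c' = c
    · rw [if_pos hcc]
      show upN (S.arity T c') τ (i : ℕ) = Exp.var (i : ℕ)
      have hi : (i : ℕ) < S.arity T c' := by rw [hcc]; exact i.isLt
      exact if_pos hi
    · rw [if_neg hcc]
      exact subst_closed Omega_closed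
  · show Exp.caseE T (subst τ x) _ = .caseE T (subst τ x) _
    congr 1
    funext c'
    show subst (upN (S.arity T c') τ)
        (letI := S.deceq T; if c' = c then (trueE : Exp S) else Omega) =
      (letI := S.deceq T; if c' = c then (trueE : Exp S) else Omega)
    by_cases hcc : c' = c
    · rw [if_pos hcc]
      show Exp.constr S.boolTy S.trueC _ = .constr S.boolTy S.trueC _
      congr 1
      funext i0
      exact (Fin.cast S.true_arity i0).elim0
    · rw [if_neg hcc]
      exact subst_closed Omega_closed

theorem applyAll_subst {l : List (Exp S → Exp S)} (hl : ∀ f ∈ l, f ∈ Qlcc S)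
    (τ : ℕ → Exp S) (e : Exp S) : subst τ (applyAll l e) = applyAll l (subst τ e) := by
  induction l with
  | nil => rfl
  | cons f l' ih =>
      show subst τ (f (applyAll l' e)) = f (applyAll l' (subst τ e))
      rw [Q_subst (hl f (List.mem_cons_self)) τ,
        ih (fun g hg => hl g (List.mem_cons_of_mem f hg))]

/-- iterated abstraction context -/
def lamCtxN : ℕ → Ctx S → Ctx S
  | 0, C => C
  | d+1, C => .lamC (lamCtxN d C)

/-- iterated application context -/
def appStackC (σ : ℕ → Exp S) : ℕ → Ctx S → Ctx S
  | 0, C => C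
  | d+1, C => appStackC σ d (.appL C (σ d))

theorem plugC_lamCtxN (d : ℕ) (C : Ctx S) (e : Exp S) :
    plugC (lamCtxN d C) e = lamN' d (plugC C e) := by
  induction d with
  | zero => rfl
  | succ d ih => show Exp.lam (plugC (lamCtxN d C) e) = _; rw [ih]; rfl

theorem plugC_appStackC (σ : ℕ → Exp S) (d : ℕ) (C : Ctx S) (e : Exp S) :
    plugC (appStackC σ d C) e = appStackE σ d (plugC C e) := by
  induction d generalizing C with
  | zero => rfl
  | succ d ih =>
      show plugC (appStackC σ d (.appL C (σ d))) e = appStackE σ d (.app (plugC C e) (σ d))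
      rw [ih]
      rfl

theorem lfreeCtx_lamCtxN (d : ℕ) {C : Ctx S} (h : lfreeCtx C) : lfreeCtx (lamCtxN d C) := by
  induction d with
  | zero => exact h
  | succ d ih => exact ih

theorem lfreeCtx_appStackC {σ : ℕ → Exp S} (hσ : ∀ k, lfree (σ k)) (d : ℕ) {C : Ctx S}
    (h : lfreeCtx C) : lfreeCtx (appStackC σ d C) := by
  induction d generalizing C with
  | zero => exact h
  | succ d ih => exact ih ⟨h, hσ d⟩

theorem ctxOfQ (l : List (Exp S → Exp S)) (hl : ∀ f ∈ l, f ∈ Qlcc S) (D : Ctx S)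
    (hD : lfreeCtx D) :
    ∃ C : Ctx S, lfreeCtx C ∧ ∀ e, plugC C e = applyAll l (plugC D e) := by
  induction l with
  | nil => exact ⟨D, hD, fun e => rfl⟩
  | cons f l' ih =>
      obtain ⟨C, hC, hCe⟩ := ih (fun g hg => hl g (List.mem_cons_of_mem f hg))
      rcases hl f (List.mem_cons_self) with ⟨r, hlr, hcr, rfl⟩ | ⟨T, c, i, rfl⟩ |
        ⟨T, c, rfl⟩
      · exact ⟨.appL C r, ⟨hC, hlr⟩, fun e => by
          show Exp.app (plugC C e) r = _
          rw [hCe]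
          rfl⟩
      · refine ⟨.caseScrut T C
            (fun c' => letI := S.deceq T; if c' = c then (Exp.var (i : ℕ) : Exp S) else Omega),
            ⟨hC, fun c' => ?_⟩, fun e => by
          show Exp.caseE T (plugC C e) _ = _
          rw [hCe]
          rfl⟩
        show lfree (letI := S.deceq T; if c' = c then (Exp.var (i : ℕ) : Exp S) else Omega)
        by_cases hcc : c' = c
        · rw [if_pos hcc]
          trivial
        · rw [if_neg hcc]
          exact Omega_lfree
      · refine ⟨.caseScrut T C
            (fun c' => letI := S.deceq T; if c' = c then (trueE : Exp S) else Omega),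
            ⟨hC, fun c' => ?_⟩, fun e => by
          show Exp.caseE T (plugC C e) _ = _
          rw [hCe]
          rfl⟩
        show lfree (letI := S.deceq T; if c' = c then (trueE : Exp S) else Omega)
        by_cases hcc : c' = c
        · rw [if_pos hcc]
          exact trueE_lfree
        · rw [if_neg hcc]
          exact Omega_lfree

theorem unpad {σ : ℕ → Exp S} (hσ : ∀ k, closed (σ k)) (d : ℕ) (e : Exp S) :
    subst (fun j => σ (j + d)) (subst (pad σ d) e) = subst σ e := by
  rw [subst_subst]
  apply subst_ext
  intro k
  by_cases h : k < d
  · rw [show pad σ d k = σ k from if_pos h]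
    exact subst_closed (hσ k)
  · rw [show pad σ d k = Exp.var (k - d) from if_neg h]
    show σ (k - d + d) = σ k
    congr 1
    omega

end Core

/-! ### Auxiliary development: completeness -/

namespace Core

variable {S : Sig}

theorem isValue_lam (u : Exp S) : isValue (Exp.lam u) := trivial

theorem isValue_constr {T : S.TyName} (c : S.CName T) (args : Fin (S.arity T c) → Exp S) :
    isValue (Exp.constr T c args) := trivial

theorem rtg_plugA (A : ACtx S) {x y : Exp S} (h : Relation.ReflTransGen lccStep x y) :
    Relation.ReflTransGen lccStep (plugA A x) (plugA A y) := by
  obtain ⟨n, hn⟩ := rtg_stepN h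
  exact stepN_rtg (stepN_plugA A hn)

theorem subst_cu1 {u : Exp S} (hcu : closedUnder 1 u) (σ : ℕ → Exp S) :
    subst σ u = subst (consSub (σ 0)) u :=
  subst_congr_on hcu (fun k hk => by
    have : k = 0 := by omega
    subst this
    rfl)

theorem stuck_app_constr {T : S.TyName} {c : S.CName T} {args : Fin (S.arity T c) → Exp S}
    {r : Exp S} (h : lccConv (Exp.app (.constr T c args) r)) : False := by
  obtain ⟨v, hrtg, hv⟩ := h
  obtain ⟨n, hn⟩ := rtg_stepN hrtg
  exact stepN_atom_absurd (A := .hole) (Or.inr (Or.inl ⟨T, c, args, r, rfl⟩)) hn hv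

theorem stuck_case {T : S.TyName} {w : Exp S} {alts : (c : S.CName T) → Exp S}
    (hw : isValue w) (hne : ∀ (c : S.CName T) (args : Fin (S.arity T c) → Exp S),
      w ≠ .constr T c args)
    (h : lccConv (Exp.caseE T w alts)) : False := by
  obtain ⟨v, hrtg, hv⟩ := h
  obtain ⟨n, hn⟩ := rtg_stepN hrtg
  exact stepN_atom_absurd (A := .hole) (Or.inr (Or.inr ⟨T, w, alts, rfl, hw, hne⟩)) hn hv

theorem Q_lfree {f : Exp S → Exp S} (hf : f ∈ Qlcc S) {x : Exp S} (hx : lfree x) :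
    lfree (f x) := by
  rcases hf with ⟨r, hl, hc, rfl⟩ | ⟨T, c, i, rfl⟩ | ⟨T, c, rfl⟩
  · exact ⟨hx, hl⟩
  · refine ⟨hx, fun c' => ?_⟩
    show lfree (letI := S.deceq T; if c' = c then (Exp.var (i : ℕ) : Exp S) else Omega)
    by_cases hcc : c' = c
    · rw [if_pos hcc]; trivial
    · rw [if_neg hcc]; exact Omega_lfree
  · refine ⟨hx, fun c' => ?_⟩
    show lfree (letI := S.deceq T; if c' = c then (trueE : Exp S) else Omega)
    by_cases hcc : c' = c
    · rw [if_pos hcc]; exact trueE_lfree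
    · rw [if_neg hcc]; exact Omega_lfree

theorem applyAll_lfree {l : List (Exp S → Exp S)} (hl : ∀ f ∈ l, f ∈ Qlcc S)
    {x : Exp S} (hx : lfree x) : lfree (applyAll l x) := by
  induction l with
  | nil => exact hx
  | cons f l' ih =>
      exact Q_lfree (hl f (List.mem_cons_self))
        (ih (fun g hg => hl g (List.mem_cons_of_mem f hg)))

/-- the relation used for the completeness direction -/
def QT (a b : Exp S) : Prop :=
  closed a ∧ closed b ∧ lfree a ∧ lfree b ∧
  ∀ l : List (Exp S → Exp S), (∀ f ∈ l, f ∈ Qlcc S) →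
    lccConv (applyAll l a) → lccConv (applyAll l b)

theorem QT_postfix : ∀ a b : Exp S, QT a b → Flcc QT a b := by
  intro a b h
  obtain ⟨hac, hbc, hal, hbl, htest⟩ := h
  constructor
  · -- lambda clause
    intro u hu
    have hconvb : lccConv b :=
      htest [] (fun f hf => absurd hf (List.not_mem_nil)) ⟨_, hu.1, hu.2⟩
    obtain ⟨w, hwrtg, hwv⟩ := hconvb
    have hwc : closed w := convTo_closed ⟨hwrtg, hwv⟩ hbc
    have hwl : lfree w := convTo_lfree ⟨hwrtg, hwv⟩ hbl
    have hcu0 : closed (Exp.lam u) := convTo_closed hu hac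
    have hcu : closedUnder 1 u := hcu0
    have hul0 : lfree (Exp.lam u) := convTo_lfree hu hal
    have hul : lfree u := hul0
    rcases value_cases hwv with ⟨u', rfl⟩ | ⟨T, c, targs, rfl⟩
    · have hcu' : closedUnder 1 u' := hwc
      have hul' : lfree u' := hwl
      refine Or.inl ⟨u', ⟨hwrtg, hwv⟩, ?_⟩
      intro σ hσ h1 h2
      have hrc : closed (patchS σ 0) := patchS_closed σ 0
      have hrl : lfree (patchS σ 0) := patchS_lfree hσ 0
      have eu : subst σ u = subst (consSub (patchS σ 0)) u := by
        rw [subst_patch h1]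
        exact subst_cu1 hcu (patchS σ)
      have eu' : subst σ u' = subst (consSub (patchS σ 0)) u' := by
        rw [subst_patch h2]
        exact subst_cu1 hcu' (patchS σ)
      refine ⟨h1, h2, lfree_subst hul hσ, lfree_subst hul' hσ, ?_⟩
      intro l hl hconv
      rw [eu] at hconv
      have hQ : (fun e => Exp.app e (patchS σ 0)) ∈ Qlcc S := fapp_mem hrl hrc
      have hl' : ∀ f ∈ l ++ [fun e => Exp.app e (patchS σ 0)], f ∈ Qlcc S := by
        intro f hf
        rcases List.mem_append.mp hf with hf | hf
        · exact hl f hf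
        · rw [List.mem_singleton.mp hf]; exact hQ
      have rtg1 : Relation.ReflTransGen lccStep (Exp.app a (patchS σ 0))
          (subst (consSub (patchS σ 0)) u) :=
        Relation.ReflTransGen.tail (rtg_plugA (.appA .hole (patchS σ 0)) hu.1)
          ⟨.hole, _, _, LccBase.nbeta, rfl, rfl⟩
      have rtg2 : Relation.ReflTransGen lccStep (Exp.app b (patchS σ 0))
          (subst (consSub (patchS σ 0)) u') :=
        Relation.ReflTransGen.tail (rtg_plugA (.appA .hole (patchS σ 0)) hwrtg)
          ⟨.hole, _, _, LccBase.nbeta, rfl, rfl⟩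
      have hconva : lccConv (applyAll (l ++ [fun e => Exp.app e (patchS σ 0)]) a) := by
        rw [applyAll_append]
        exact conv_back_rtg (applyAll_rtg hl rtg1) hconv
      have hconvb2 := htest _ hl' hconva
      rw [applyAll_append] at hconvb2
      have := conv_forward_rtg hconvb2 (applyAll_rtg hl rtg2)
      rwa [← eu'] at this
    · refine Or.inr ⟨T, c, targs, ⟨hwrtg, hwv⟩, ?_⟩
      intro σ hσ h1 hconv
      have hrc : closed (patchS σ 0) := patchS_closed σ 0
      have hrl : lfree (patchS σ 0) := patchS_lfree hσ 0
      have eu : subst σ u = subst (consSub (patchS σ 0)) u := by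
        rw [subst_patch h1]
        exact subst_cu1 hcu (patchS σ)
      rw [eu] at hconv
      have rtg1 : Relation.ReflTransGen lccStep (Exp.app a (patchS σ 0))
          (subst (consSub (patchS σ 0)) u) :=
        Relation.ReflTransGen.tail (rtg_plugA (.appA .hole (patchS σ 0)) hu.1)
          ⟨.hole, _, _, LccBase.nbeta, rfl, rfl⟩
      have hconva : lccConv (applyAll [fun e => Exp.app e (patchS σ 0)] a) :=
        conv_back_rtg rtg1 hconv
      have hconvb2 := htest [fun e => Exp.app e (patchS σ 0)]
        (fun f hf => by rw [List.mem_singleton.mp hf]; exact fapp_mem hrl hrc) hconva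
      have hfin : lccConv (Exp.app (.constr T c targs) (patchS σ 0)) :=
        conv_forward_rtg hconvb2 (rtg_plugA (.appA .hole (patchS σ 0)) hwrtg)
      exact stuck_app_constr hfin
  · -- constructor clause
    intro T c args hconv_a
    have hconvb : lccConv b :=
      htest [] (fun f hf => absurd hf (List.not_mem_nil)) ⟨_, hconv_a.1, hconv_a.2⟩
    obtain ⟨w, hwrtg, hwv⟩ := hconvb
    have hwc : closed w := convTo_closed ⟨hwrtg, hwv⟩ hbc
    have hwl : lfree w := convTo_lfree ⟨hwrtg, hwv⟩ hbl
    -- the `caseTrue` test converges on `a`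
    have hstep_true : lccStep (Exp.caseE T (.constr T c args)
        (fun c' => letI := S.deceq T; if c' = c then (trueE : Exp S) else Omega))
        (subst (instSub args)
          (letI := S.deceq T; if c = c then (trueE : Exp S) else Omega)) :=
      ⟨.hole, _, _, LccBase.ncase, rfl, rfl⟩
    rw [if_pos rfl] at hstep_true
    have haconv_true : lccConv (caseTrueCtx T c a) := by
      refine conv_back_rtg (Relation.ReflTransGen.tail
        (rtg_plugA (.caseA T .hole _) hconv_a.1) hstep_true) (value_conv ?_)
      exact isValue_subst (isValue_constr S.trueC _) _
    have hb_true := htest [caseTrueCtx T c]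
      (fun f hf => by rw [List.mem_singleton.mp hf]; exact caseTrue_mem T c) haconv_true
    rcases value_cases hwv with ⟨u', rfl⟩ | ⟨T2, c2, targs, rfl⟩
    · exfalso
      have hfin := conv_forward_rtg hb_true (rtg_plugA (.caseA T .hole _) hwrtg)
      exact stuck_case (isValue_lam u') (fun c0 args0 hh => by cases hh) hfin
    · have hT : T2 = T := by
        by_contra hT
        have hfin := conv_forward_rtg hb_true (rtg_plugA (.caseA T .hole _) hwrtg)
        refine stuck_case (isValue_constr c2 targs) ?_ hfin
        intro c0 args0 hh
        injection hh with h1 _ _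
        exact hT h1
      subst hT
      have hc2 : c2 = c := by
        by_contra hc2
        have hfin := conv_forward_rtg hb_true (rtg_plugA (.caseA T2 .hole _) hwrtg)
        have hstep2 : lccStep (Exp.caseE T2 (.constr T2 c2 targs)
            (fun c' => letI := S.deceq T2; if c' = c then (trueE : Exp S) else Omega))
            (subst (instSub targs)
              (letI := S.deceq T2; if c2 = c then (trueE : Exp S) else Omega)) :=
          ⟨.hole, _, _, LccBase.ncase, rfl, rfl⟩
        rw [if_neg hc2, subst_closed Omega_closed] at hstep2
        exact no_conv_loop omega_step (conv_forward_step hfin hstep2)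
      subst hc2
      refine ⟨targs, ⟨hwrtg, hwv⟩, fun i => ?_⟩
      refine ⟨(convTo_closed hconv_a hac) i, hwc i,
        (convTo_lfree hconv_a hal) i, hwl i, ?_⟩
      intro l hl hconv
      have einst : ∀ (g : Fin (S.arity T2 c2) → Exp S),
          subst (instSub g) (Exp.var (i : ℕ)) = g i := by
        intro g
        show instSub g (i : ℕ) = g i
        rw [show instSub g (i : ℕ) = g ⟨(i : ℕ), i.isLt⟩ from dif_pos i.isLt]
      have hstep_sel : ∀ (g : Fin (S.arity T2 c2) → Exp S),
          lccStep (Exp.caseE T2 (.constr T2 c2 g)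
            (fun c' => letI := S.deceq T2;
              if c' = c2 then (Exp.var (i : ℕ) : Exp S) else Omega)) (g i) := by
        intro g
        have hstep : lccStep (Exp.caseE T2 (.constr T2 c2 g)
            (fun c' => letI := S.deceq T2;
              if c' = c2 then (Exp.var (i : ℕ) : Exp S) else Omega))
            (subst (instSub g)
              (letI := S.deceq T2;
                if c2 = c2 then (Exp.var (i : ℕ) : Exp S) else Omega)) :=
          ⟨.hole, _, _, LccBase.ncase, rfl, rfl⟩
        rwa [if_pos rfl, einst g] at hstep
      have rtg1 : Relation.ReflTransGen lccStep (caseSelCtx T2 c2 i a) (args i) :=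
        Relation.ReflTransGen.tail (rtg_plugA (.caseA T2 .hole _) hconv_a.1) (hstep_sel args)
      have rtg2 : Relation.ReflTransGen lccStep (caseSelCtx T2 c2 i b) (targs i) :=
        Relation.ReflTransGen.tail (rtg_plugA (.caseA T2 .hole _) hwrtg) (hstep_sel targs)
      have hl' : ∀ f ∈ l ++ [caseSelCtx T2 c2 i], f ∈ Qlcc S := by
        intro f hf
        rcases List.mem_append.mp hf with hf | hf
        · exact hl f hf
        · rw [List.mem_singleton.mp hf]; exact caseSel_mem T2 c2 i
      have hconva : lccConv (applyAll (l ++ [caseSelCtx T2 c2 i]) a) := by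
        rw [applyAll_append]
        exact conv_back_rtg (applyAll_rtg hl rtg1) hconv
      have hconvb2 := htest _ hl' hconva
      rw [applyAll_append] at hconvb2
      exact conv_forward_rtg hconvb2 (applyAll_rtg hl rtg2)

/-- completeness: the contextual preorder is contained in open applicative similarity -/
theorem leLcc_to_openL_sim {s t : Exp S} (hls : lfree s) (hlt : lfree t) (h : leLcc s t) :
    openL simLcc s t := by
  intro σ hσ h1 h2
  refine sim_coind QT_postfix ?_
  refine ⟨h1, h2, lfree_subst hls hσ, lfree_subst hlt hσ, ?_⟩
  intro l hl hconv
  have e1 : subst σ s = subst (patchS σ) s := subst_patch h1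
  have e2 : subst σ t = subst (patchS σ) t := subst_patch h2
  rw [e2, ← applyAll_subst hl]
  rw [e1, ← applyAll_subst hl] at hconv
  obtain ⟨v, hrtg, hv⟩ := hconv
  obtain ⟨n, hn⟩ := rtg_stepN hrtg
  obtain ⟨d0, hd0⟩ := approx (patchS_closed σ) (patchS_lfree hσ) n (applyAll l s) v
    (applyAll_lfree hl hls) hn hv
  have hconvd := hd0 d0 le_rfl
  rw [applyAll_subst hl] at hconvd
  have hconv_ctx : lccConv (applyAll l (appStackE (patchS σ) d0 (lamN' d0 s))) :=
    conv_back_rtg (applyAll_rtg hl (multiBeta (patchS_closed σ) d0 s)) hconvd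
  obtain ⟨C, hCl, hCe⟩ := ctxOfQ l hl (appStackC (patchS σ) d0 (lamCtxN d0 .hole))
    (lfreeCtx_appStackC (patchS_lfree hσ) d0 (lfreeCtx_lamCtxN d0 trivial))
  have hCe' : ∀ e, plugC C e = applyAll l (appStackE (patchS σ) d0 (lamN' d0 e)) := by
    intro e
    rw [hCe, plugC_appStackC, plugC_lamCtxN]
    rfl
  have hconvC : lccConv (plugC C s) := by rw [hCe']; exact hconv_ctx
  have hconvCt := h C hCl hconvC
  rw [hCe'] at hconvCt
  have hconv_t := conv_forward_rtg hconvCt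
    (applyAll_rtg hl (multiBeta (patchS_closed σ) d0 t))
  rw [← applyAll_subst hl] at hconv_t
  have hfin := conv_subst (fun j => patchS σ (j + d0)) hconv_t
  rw [unpad (patchS_closed σ) d0] at hfin
  exact hfin

end Core

/-! ### Auxiliary development: the Howe closure -/

namespace Core

variable {S : Sig}

theorem openL_rename {R : Exp S → Exp S → Prop} {a b : Exp S} (h : openL R a b) (f : ℕ → ℕ) :
    openL R (rename f a) (rename f b) := by
  intro σ hσ h1 h2
  rw [subst_rename σ f a] at h1 ⊢
  rw [subst_rename σ f b] at h2 ⊢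
  exact h _ (fun k => hσ (f k)) h1 h2

/-- the Howe closure of open similarity (on letrec-free expressions) -/
inductive Howe : Exp S → Exp S → Prop
  | var {k : ℕ} {t : Exp S} : openL simLcc (.var k) t → lfree t → Howe (.var k) t
  | app {a a' b b' t : Exp S} : Howe a a' → Howe b b' →
      openL simLcc (.app a' b') t → lfree t → Howe (.app a b) t
  | lam {a a' t : Exp S} : Howe a a' → openL simLcc (.lam a') t → lfree t → Howe (.lam a) t
  | constr {T : S.TyName} {c : S.CName T} {args args' : Fin (S.arity T c) → Exp S}
      {t : Exp S} :
      (∀ i, Howe (args i) (args' i)) → openL simLcc (.constr T c args') t → lfree t →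
      Howe (.constr T c args) t
  | seqE {a a' b b' t : Exp S} : Howe a a' → Howe b b' →
      openL simLcc (.seqE a' b') t → lfree t → Howe (.seqE a b) t
  | caseE {T : S.TyName} {e e' : Exp S} {alts alts' : (c : S.CName T) → Exp S} {t : Exp S} :
      Howe e e' → (∀ c, Howe (alts c) (alts' c)) →
      openL simLcc (.caseE T e' alts') t → lfree t → Howe (.caseE T e alts) t

theorem Howe_lfree_right {a b : Exp S} (h : Howe a b) : lfree b := by
  cases h <;> assumption

theorem Howe_lfree_left {a b : Exp S} (h : Howe a b) : lfree a := by
  induction h with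
  | var _ _ => trivial
  | app _ _ _ _ ih1 ih2 => exact ⟨ih1, ih2⟩
  | lam _ _ _ ih => exact ih
  | constr _ _ _ ih => exact fun i => ih i
  | seqE _ _ _ _ ih1 ih2 => exact ⟨ih1, ih2⟩
  | caseE _ _ _ _ ihe iha => exact ⟨ihe, fun c => iha c⟩

theorem Howe_refl {a : Exp S} (ha : lfree a) : Howe a a := by
  induction a with
  | var k => exact Howe.var (openL_sim_refl _) trivial
  | app u v ihu ihv =>
      exact Howe.app (ihu ha.1) (ihv ha.2) (openL_sim_refl _) ha
  | lam u ih => exact Howe.lam (ih ha) (openL_sim_refl _) ha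
  | constr T c args ih =>
      exact Howe.constr (fun i => ih i (ha i)) (openL_sim_refl _) ha
  | seqE u v ihu ihv =>
      exact Howe.seqE (ihu ha.1) (ihv ha.2) (openL_sim_refl _) ha
  | caseE T sc alts ihsc ihalts =>
      exact Howe.caseE (ihsc ha.1) (fun c => ihalts c (ha.2 c)) (openL_sim_refl _) ha
  | letrecE n b t ihb iht => exact absurd ha id

theorem Howe_simR {a b c : Exp S} (h : Howe a b) (hbc : openL simLcc b c) (hc : lfree c) :
    Howe a c := by
  cases h with
  | var hs _ => exact Howe.var (openL_sim_trans hs hbc) hc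
  | app h1 h2 hs _ => exact Howe.app h1 h2 (openL_sim_trans hs hbc) hc
  | lam h1 hs _ => exact Howe.lam h1 (openL_sim_trans hs hbc) hc
  | constr h1 hs _ => exact Howe.constr h1 (openL_sim_trans hs hbc) hc
  | seqE h1 h2 hs _ => exact Howe.seqE h1 h2 (openL_sim_trans hs hbc) hc
  | caseE h1 h2 hs _ => exact Howe.caseE h1 h2 (openL_sim_trans hs hbc) hc

theorem Howe_sim {a b : Exp S} (ha : lfree a) (h : openL simLcc a b) (hb : lfree b) :
    Howe a b :=
  Howe_simR (Howe_refl ha) h hb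

theorem Howe_rename {a b : Exp S} (h : Howe a b) : ∀ f, Howe (rename f a) (rename f b) := by
  induction h with
  | var hs hl =>
      intro f
      exact Howe.var (openL_rename hs f) (lfree_rename hl f)
  | app _ _ hs hl ih1 ih2 =>
      intro f
      exact Howe.app (ih1 f) (ih2 f)
        (by
          have := openL_rename hs f
          exact this) (lfree_rename hl f)
  | lam _ hs hl ih =>
      intro f
      exact Howe.lam (ih (liftN 1 f))
        (by
          have := openL_rename hs f
          exact this) (lfree_rename hl f)
  | constr _ hs hl ih =>
      intro f
      exact Howe.constr (fun i => ih i f)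
        (by
          have := openL_rename hs f
          exact this) (lfree_rename hl f)
  | seqE _ _ hs hl ih1 ih2 =>
      intro f
      exact Howe.seqE (ih1 f) (ih2 f)
        (by
          have := openL_rename hs f
          exact this) (lfree_rename hl f)
  | caseE _ _ hs hl ihe iha =>
      intro f
      exact Howe.caseE (ihe f) (fun c => iha c (liftN (S.arity _ c) f))
        (by
          have := openL_rename hs f
          exact this) (lfree_rename hl f)

theorem Howe_upN {σ1 σ2 : ℕ → Exp S} (hσ : ∀ k, Howe (σ1 k) (σ2 k)) (m : ℕ) :
    ∀ k, Howe (upN m σ1 k) (upN m σ2 k) := by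
  intro k
  by_cases h : k < m
  · rw [show upN m σ1 k = .var k from if_pos h, show upN m σ2 k = .var k from if_pos h]
    exact Howe_refl trivial
  · rw [show upN m σ1 k = rename (· + m) (σ1 (k - m)) from if_neg h,
      show upN m σ2 k = rename (· + m) (σ2 (k - m)) from if_neg h]
    exact Howe_rename (hσ (k - m)) _

theorem Howe_subst {a b : Exp S} (h : Howe a b) :
    ∀ {σ1 σ2 : ℕ → Exp S}, (∀ k, Howe (σ1 k) (σ2 k)) →
      Howe (subst σ1 a) (subst σ2 b) := by
  induction h with
  | var hs hl =>
      intro σ1 σ2 hσ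
      refine Howe_simR (hσ _) ?_ (lfree_subst hl (fun k => Howe_lfree_right (hσ k)))
      exact openL_subst hs (fun k => Howe_lfree_right (hσ k))
  | app _ _ hs hl ih1 ih2 =>
      intro σ1 σ2 hσ
      refine Howe.app (ih1 hσ) (ih2 hσ) ?_
        (lfree_subst hl (fun k => Howe_lfree_right (hσ k)))
      exact openL_subst hs (fun k => Howe_lfree_right (hσ k))
  | lam _ hs hl ih =>
      intro σ1 σ2 hσ
      refine Howe.lam (ih (Howe_upN hσ 1)) ?_
        (lfree_subst hl (fun k => Howe_lfree_right (hσ k)))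
      exact openL_subst hs (fun k => Howe_lfree_right (hσ k))
  | constr _ hs hl ih =>
      intro σ1 σ2 hσ
      refine Howe.constr (fun i => ih i hσ) ?_
        (lfree_subst hl (fun k => Howe_lfree_right (hσ k)))
      exact openL_subst hs (fun k => Howe_lfree_right (hσ k))
  | seqE _ _ hs hl ih1 ih2 =>
      intro σ1 σ2 hσ
      refine Howe.seqE (ih1 hσ) (ih2 hσ) ?_
        (lfree_subst hl (fun k => Howe_lfree_right (hσ k)))
      exact openL_subst hs (fun k => Howe_lfree_right (hσ k))
  | caseE _ _ hs hl ihe iha =>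
      intro σ1 σ2 hσ
      refine Howe.caseE (ihe hσ) (fun c => iha c (Howe_upN hσ _)) ?_
        (lfree_subst hl (fun k => Howe_lfree_right (hσ k)))
      exact openL_subst hs (fun k => Howe_lfree_right (hσ k))

end Core

/-! ### Auxiliary development: the key lemma of Howe's method -/

namespace Core

variable {S : Sig}

/-- value-matching relation used in the key lemma -/
def ValRel (v w : Exp S) : Prop :=
  (∀ u, v = .lam u →
    ((∃ u', w = .lam u' ∧ Howe u u') ∨
     ((∃ T c targs, w = .constr T c targs) ∧
      ∃ u₁, closedUnder 1 u₁ ∧ lfree u₁ ∧ Howe u u₁ ∧ cBot u₁))) ∧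
  (∀ (T : S.TyName) (c : S.CName T) (args : Fin (S.arity T c) → Exp S),
    v = .constr T c args →
    ∃ targs, w = .constr T c targs ∧ ∀ i, Howe (args i) (targs i))

theorem valRel_transfer {cc b w v : Exp S} (hsim : simLcc cc b) (hcc : closed cc)
    (hccl : lfree cc) (hb : closed b) (hbl : lfree b) (hcw : lccConvTo cc w)
    (hrel : ValRel v w) (hvval : isValue v) :
    ∃ w', lccConvTo b w' ∧ ValRel v w' := by
  have F := sim_postfix hsim
  rcases value_cases hvval with ⟨u, rfl⟩ | ⟨T, c, args, rfl⟩
  · rcases hrel.1 u rfl with ⟨u₁, rfl, hHow⟩ | ⟨⟨T, c, targs, rfl⟩, hpack⟩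
    · rcases F.1 u₁ hcw with ⟨u₂, hu₂, hopen⟩ | ⟨T, c, targs, ht', hbot⟩
      · refine ⟨.lam u₂, hu₂, ?_, ?_⟩
        · intro u0 h0
          injection h0 with h0
          subst h0
          have hl2 : lfree (Exp.lam u₂) := convTo_lfree hu₂ hbl
          exact Or.inl ⟨u₂, rfl, Howe_simR hHow hopen hl2⟩
        · intro T0 c0 args0 h0
          exact absurd h0 (by simp)
      · refine ⟨_, ht', ?_, ?_⟩
        · intro u0 h0
          injection h0 with h0
          subst h0
          refine Or.inr ⟨⟨T, c, targs, rfl⟩, u₁, ?_, ?_, hHow, hbot⟩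
          · have h0' : closed (Exp.lam u₁) := convTo_closed hcw hcc
            exact h0'
          · have h0' : lfree (Exp.lam u₁) := convTo_lfree hcw hccl
            exact h0'
        · intro T0 c0 args0 h0
          exact absurd h0 (by simp)
    · obtain ⟨targs2, ht2, _⟩ := F.2 T c targs hcw
      refine ⟨_, ht2, ?_, ?_⟩
      · intro u0 h0
        injection h0 with h0
        subst h0
        exact Or.inr ⟨⟨T, c, targs2, rfl⟩, hpack⟩
      · intro T0 c0 args0 h0
        exact absurd h0 (by simp)
  · obtain ⟨wargs, rfl, hHow⟩ := hrel.2 T c args rfl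
    obtain ⟨targs, ht2, hsimargs⟩ := F.2 T c wargs hcw
    have hwargsc : ∀ i, closed (wargs i) := convTo_closed hcw hcc
    have htargsc : ∀ i, closed (targs i) := convTo_closed ht2 hb
    have htargsl : ∀ i, lfree (targs i) := convTo_lfree ht2 hbl
    refine ⟨_, ht2, ?_, ?_⟩
    · intro u0 h0
      exact absurd h0 (by simp)
    · intro T0 c0 args0 h0
      injection h0 with h1 h2 h3
      subst h1
      have h2' : c = c0 := by first | exact h2 | exact eq_of_heq h2
      subst h2'
      have h3' : args = args0 := by first | exact h3 | exact eq_of_heq h3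
      subst h3'
      refine ⟨targs, rfl, fun i => ?_⟩
      exact Howe_simR (hHow i)
        (sim_of_closed (hsimargs i) (hwargsc i) (htargsc i)) (htargsl i)

theorem Howe_omega_pt : ∀ _ : ℕ, Howe (Omega : Exp S) Omega :=
  fun _ => Howe_refl Omega_lfree

theorem Howe_closed_right {a b : Exp S} (hac : closed a) (h : Howe a b) :
    Howe a (subst (fun _ => Omega) b) := by
  have := Howe_subst h (σ1 := fun _ => Omega) (σ2 := fun _ => Omega) Howe_omega_pt
  rwa [subst_closed hac] at this

theorem Howe_key :
    ∀ (n : ℕ) {a b v : Exp S}, StepN n a v → isValue v → closed a → lfree a →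
      closed b → lfree b → Howe a b →
      ∃ w, lccConvTo b w ∧ ValRel v w := by
  intro n
  induction n using Nat.strong_induction_on with
  | _ n ih =>
    intro a b v hsn hv hac hal hbc hbl hH
    cases hH with
    | @var k t hs hl => exact absurd hac (Nat.not_lt_zero k)
    | @lam u a' t h1 hs hl =>
        obtain ⟨_, hva⟩ := stepN_value (isValue_lam u) hsn
        subst hva
        have hcu : closedUnder 1 u := hac
        have hsim : simLcc (subst (fun _ => Omega) (.lam a')) b := by
          have := hs (fun _ => Omega) (fun _ => Omega_lfree)
            (closed_subst_all (fun _ => Omega_closed) _)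
            (by rw [subst_closed hbc]; exact hbc)
          rwa [subst_closed hbc] at this
        have hccc : closed (subst (fun _ => Omega) (.lam a')) :=
          closed_subst_all (fun _ => Omega_closed) _
        have hccl : lfree (subst (fun _ => Omega) (.lam a')) := by
          have h0 : lfree a' := Howe_lfree_right h1
          exact lfree_subst (e := Exp.lam a') h0 (fun _ => Omega_lfree)
        have hHowU : Howe u (subst (upN 1 (fun _ => Omega)) a') := by
          have := Howe_subst h1 (Howe_upN Howe_omega_pt 1)
          rwa [subst_id_of (σ := upN 1 (fun _ => Omega)) (d := 1)
            (fun k hk => if_pos hk) hcu] at this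
        refine valRel_transfer hsim hccc hccl hbc hbl
          ⟨Relation.ReflTransGen.refl, isValue_lam _⟩ ⟨?_, ?_⟩ (isValue_lam u)
        · intro u0 h0
          injection h0 with h0
          subst h0
          exact Or.inl ⟨_, rfl, hHowU⟩
        · intro T0 c0 args0 h0
          exact absurd h0 (by simp)
    | @constr T c args args' t h1 hs hl =>
        obtain ⟨_, hva⟩ := stepN_value (isValue_constr c args) hsn
        subst hva
        have hsim : simLcc (subst (fun _ => Omega) (.constr T c args')) b := by
          have := hs (fun _ => Omega) (fun _ => Omega_lfree)
            (closed_subst_all (fun _ => Omega_closed) _)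
            (by rw [subst_closed hbc]; exact hbc)
          rwa [subst_closed hbc] at this
        refine valRel_transfer hsim (closed_subst_all (fun _ => Omega_closed) _)
          (lfree_subst (e := Exp.constr T c args') (fun i => Howe_lfree_right (h1 i))
            (fun _ => Omega_lfree)) hbc hbl
          ⟨Relation.ReflTransGen.refl, isValue_constr _ _⟩ ⟨?_, ?_⟩ (isValue_constr c args)
        · intro u0 h0
          exact absurd h0 (by simp)
        · intro T0 c0 args0 h0
          injection h0 with hT0 hc0 hargs0
          subst hT0
          have hc0' : c = c0 := by first | exact hc0 | exact eq_of_heq hc0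
          subst hc0'
          have hargs0' : args = args0 := by first | exact hargs0 | exact eq_of_heq hargs0
          subst hargs0'
          refine ⟨fun i => subst (fun _ => Omega) (args' i), rfl, fun i => ?_⟩
          have := Howe_subst (h1 i) (σ1 := fun _ => Omega) (σ2 := fun _ => Omega) Howe_omega_pt
          rwa [subst_closed (hac i)] at this
    | @app a1 a' a2 b' t h1 h2 hs hl =>
        obtain ⟨k1, m1, w1, hsum, hk1, hw1, hm1⟩ :=
          evalA n a1 (.appA .hole a2) hsn hv hal.1
        rcases value_cases hw1 with ⟨u, rfl⟩ | ⟨T, c, wargs, rfl⟩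
        · have hm1' : StepN m1 (Exp.app (.lam u) a2) v := hm1
          have hstep : lccStep (Exp.app (.lam u) a2) (subst (consSub a2) u) :=
            ⟨.hole, _, _, LccBase.nbeta, rfl, rfl⟩
          obtain ⟨m2, hm2eq, hm2⟩ := stepN_forced hm1' hv hstep
          -- closed Omega-instances of the Howe intermediates
          have hB1H : Howe a1 (subst (fun _ => Omega) a') := Howe_closed_right hac.1 h1
          have hB2H : Howe a2 (subst (fun _ => Omega) b') := Howe_closed_right hac.2 h2
          have hB1c : closed (subst (fun _ => Omega) a') :=
            closed_subst_all (fun _ => Omega_closed) _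
          have hB2c : closed (subst (fun _ => Omega) b') :=
            closed_subst_all (fun _ => Omega_closed) _
          have hB1l : lfree (subst (fun _ => Omega) a') :=
            lfree_subst (Howe_lfree_right h1) (fun _ => Omega_lfree)
          have hB2l : lfree (subst (fun _ => Omega) b') :=
            lfree_subst (Howe_lfree_right h2) (fun _ => Omega_lfree)
          obtain ⟨w1b, hw1b, hrel1⟩ := ih k1 (by omega) hk1 hw1 hac.1 hal.1 hB1c hB1l hB1H
          have hlamuc : closed (Exp.lam u) := stepN_closed hk1 hac.1
          have hlamul : lfree (Exp.lam u) := stepN_lfree hk1 hal.1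
          have hcs : ∀ k, Howe (consSub a2 k) (consSub (subst (fun _ => Omega) b') k) := by
            intro k
            cases k with
            | zero => exact hB2H
            | succ k => exact Howe_refl trivial
          have hredc : closed (subst (consSub a2) u) := by
            refine closedUnder_subst (d := 1) hlamuc (fun k hk => ?_)
            have : k = 0 := by omega
            subst this
            exact hac.2
          have hredl : lfree (subst (consSub a2) u) := by
            refine lfree_subst hlamul (fun k => ?_)
            cases k with
            | zero => exact hal.2
            | succ k => trivial
          rcases hrel1.1 u rfl with ⟨u', rfl, hHowU⟩ |
            ⟨⟨T, c, targs, rfl⟩, u₁, hcu1, hlu1, hHowU1, hbot⟩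
          · have hcu'0 : closed (Exp.lam u') := convTo_closed hw1b hB1c
            have hcu' : closedUnder 1 u' := hcu'0
            have hlu'0 : lfree (Exp.lam u') := convTo_lfree hw1b hB1l
            have hlu' : lfree u' := hlu'0
            have hHowRed : Howe (subst (consSub a2) u)
                (subst (consSub (subst (fun _ => Omega) b')) u') := Howe_subst hHowU hcs
            have hred'c : closed (subst (consSub (subst (fun _ => Omega) b')) u') := by
              refine closedUnder_subst (d := 1) hcu' (fun k hk => ?_)
              have : k = 0 := by omega
              subst this
              exact hB2c
            have hred'l : lfree (subst (consSub (subst (fun _ => Omega) b')) u') := by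
              refine lfree_subst hlu' (fun k => ?_)
              cases k with
              | zero => exact hB2l
              | succ k => trivial
            obtain ⟨w, hw, hrelv⟩ :=
              ih m2 (by omega) hm2 hv hredc hredl hred'c hred'l hHowRed
            have hsim : simLcc (Exp.app (subst (fun _ => Omega) a')
                (subst (fun _ => Omega) b')) b := by
              have := hs (fun _ => Omega) (fun _ => Omega_lfree)
                (closed_subst_all (fun _ => Omega_closed) _)
                (by rw [subst_closed hbc]; exact hbc)
              rwa [subst_closed hbc] at this
            have hccw : lccConvTo (Exp.app (subst (fun _ => Omega) a')
                (subst (fun _ => Omega) b')) w := by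
              refine ⟨?_, hw.2⟩
              refine Relation.ReflTransGen.trans
                (rtg_plugA (.appA .hole (subst (fun _ => Omega) b')) hw1b.1) ?_
              exact Relation.ReflTransGen.head
                ⟨.hole, _, _, LccBase.nbeta, rfl, rfl⟩ hw.1
            exact valRel_transfer hsim ⟨hB1c, hB2c⟩ ⟨hB1l, hB2l⟩ hbc hbl hccw hrelv hv
          · exfalso
            have hHowRed : Howe (subst (consSub a2) u)
                (subst (consSub (subst (fun _ => Omega) b')) u₁) := Howe_subst hHowU1 hcs
            have hred'c : closed (subst (consSub (subst (fun _ => Omega) b')) u₁) := by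
              refine closedUnder_subst (d := 1) hcu1 (fun k hk => ?_)
              have : k = 0 := by omega
              subst this
              exact hB2c
            have hred'l : lfree (subst (consSub (subst (fun _ => Omega) b')) u₁) := by
              refine lfree_subst hlu1 (fun k => ?_)
              cases k with
              | zero => exact hB2l
              | succ k => trivial
            obtain ⟨w, hw, _⟩ :=
              ih m2 (by omega) hm2 hv hredc hredl hred'c hred'l hHowRed
            have e1 : subst (fun k => if k = 0 then subst (fun _ => Omega) b' else Omega) u₁ =
                subst (consSub (subst (fun _ => Omega) b')) u₁ :=
              subst_congr_on hcu1 (fun k hk => by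
                have : k = 0 := by omega
                subst this
                rfl)
            refine hbot (fun k => if k = 0 then subst (fun _ => Omega) b' else Omega)
              (fun k => by
                show lfree (if k = 0 then subst (fun _ => Omega) b' else Omega)
                by_cases h0 : k = 0
                · rw [if_pos h0]; exact hB2l
                · rw [if_neg h0]; exact Omega_lfree)
              (by rw [e1]; exact hred'c) ?_
            rw [e1]
            exact ⟨w, hw.1, hw.2⟩
        · exact absurd (stepN_atom_absurd (A := .hole)
            (Or.inr (Or.inl ⟨T, c, wargs, a2, rfl⟩)) hm1 hv) id
    | @seqE a1 a' a2 b' t h1 h2 hs hl =>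
        obtain ⟨k1, m1, w1, hsum, hk1, hw1, hm1⟩ :=
          evalA n a1 (.seqA .hole a2) hsn hv hal.1
        have hm1' : StepN m1 (Exp.seqE w1 a2) v := hm1
        have hstep : lccStep (Exp.seqE w1 a2) a2 :=
          ⟨.hole, _, _, LccBase.nseq hw1, rfl, rfl⟩
        obtain ⟨m2, hm2eq, hm2⟩ := stepN_forced hm1' hv hstep
        have hB1H : Howe a1 (subst (fun _ => Omega) a') := Howe_closed_right hac.1 h1
        have hB2H : Howe a2 (subst (fun _ => Omega) b') := Howe_closed_right hac.2 h2
        have hB1c : closed (subst (fun _ => Omega) a') :=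
          closed_subst_all (fun _ => Omega_closed) _
        have hB2c : closed (subst (fun _ => Omega) b') :=
          closed_subst_all (fun _ => Omega_closed) _
        have hB1l : lfree (subst (fun _ => Omega) a') :=
          lfree_subst (Howe_lfree_right h1) (fun _ => Omega_lfree)
        have hB2l : lfree (subst (fun _ => Omega) b') :=
          lfree_subst (Howe_lfree_right h2) (fun _ => Omega_lfree)
        obtain ⟨w1b, hw1b, _⟩ := ih k1 (by omega) hk1 hw1 hac.1 hal.1 hB1c hB1l hB1H
        obtain ⟨w, hw, hrelv⟩ := ih m2 (by omega) hm2 hv hac.2 hal.2 hB2c hB2l hB2H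
        have hsim : simLcc (Exp.seqE (subst (fun _ => Omega) a')
            (subst (fun _ => Omega) b')) b := by
          have := hs (fun _ => Omega) (fun _ => Omega_lfree)
            (closed_subst_all (fun _ => Omega_closed) _)
            (by rw [subst_closed hbc]; exact hbc)
          rwa [subst_closed hbc] at this
        have hccw : lccConvTo (Exp.seqE (subst (fun _ => Omega) a')
            (subst (fun _ => Omega) b')) w := by
          refine ⟨?_, hw.2⟩
          refine Relation.ReflTransGen.trans
            (rtg_plugA (.seqA .hole (subst (fun _ => Omega) b')) hw1b.1) ?_
          exact Relation.ReflTransGen.head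
            ⟨.hole, _, _, LccBase.nseq hw1b.2, rfl, rfl⟩ hw.1
        exact valRel_transfer hsim ⟨hB1c, hB2c⟩ ⟨hB1l, hB2l⟩ hbc hbl hccw hrelv hv
    | @caseE T a1 e' alts alts' t h1 h2 hs hl =>
        obtain ⟨k1, m1, w1, hsum, hk1, hw1, hm1⟩ :=
          evalA n a1 (.caseA T .hole alts) hsn hv hal.1
        have hm1' : StepN m1 (Exp.caseE T w1 alts) v := hm1
        rcases value_cases hw1 with ⟨u, rfl⟩ | ⟨T', c, wargs, rfl⟩
        · exact absurd (stepN_atom_absurd (A := .hole) (Or.inr (Or.inr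
            ⟨T, _, alts, rfl, hw1, fun c args hh => by cases hh⟩)) hm1' hv) id
        · by_cases hT : T' = T
          · subst hT
            have hstep : lccStep (Exp.caseE T' (.constr T' c wargs) alts)
                (subst (instSub wargs) (alts c)) :=
              ⟨.hole, _, _, LccBase.ncase, rfl, rfl⟩
            obtain ⟨m2, hm2eq, hm2⟩ := stepN_forced hm1' hv hstep
            have hE'H : Howe a1 (subst (fun _ => Omega) e') := Howe_closed_right hac.1 h1
            have hE'c : closed (subst (fun _ => Omega) e') :=
              closed_subst_all (fun _ => Omega_closed) _
            have hE'l : lfree (subst (fun _ => Omega) e') :=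
              lfree_subst (Howe_lfree_right h1) (fun _ => Omega_lfree)
            obtain ⟨w1b, hw1b, hrel1⟩ := ih k1 (by omega) hk1 hw1 hac.1 hal.1 hE'c hE'l hE'H
            obtain ⟨targs, rfl, hHowArgs⟩ := hrel1.2 T' c wargs rfl
            have hwargsc : ∀ i, closed (wargs i) := stepN_closed hk1 hac.1
            have hwargsl : ∀ i, lfree (wargs i) := stepN_lfree hk1 hal.1
            have htargsc : ∀ i, closed (targs i) := convTo_closed hw1b hE'c
            have htargsl : ∀ i, lfree (targs i) := convTo_lfree hw1b hE'l
            -- padded substitutions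
            set σL : ℕ → Exp S :=
              fun k => if h : k < S.arity T' c then wargs ⟨k, h⟩ else Omega with hσL
            set σR : ℕ → Exp S :=
              fun k => if h : k < S.arity T' c then targs ⟨k, h⟩ else Omega with hσR
            have σLpos : ∀ k (hk : k < S.arity T' c), σL k = wargs ⟨k, hk⟩ := by
              intro k hk
              rw [hσL]
              exact dif_pos hk
            have σLneg : ∀ k, ¬ k < S.arity T' c → σL k = Omega := by
              intro k hk
              rw [hσL]
              exact dif_neg hk
            have σRpos : ∀ k (hk : k < S.arity T' c), σR k = targs ⟨k, hk⟩ := by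
              intro k hk
              rw [hσR]
              exact dif_pos hk
            have σRneg : ∀ k, ¬ k < S.arity T' c → σR k = Omega := by
              intro k hk
              rw [hσR]
              exact dif_neg hk
            have haltc : closedUnder (S.arity T' c) (alts c) := by
              have := hac.2 c
              exact closedUnder_mono (by omega) this
            have eL : subst (instSub wargs) (alts c) = subst σL (alts c) := by
              refine subst_congr_on haltc (fun k hk => ?_)
              rw [σLpos k hk]
              exact dif_pos hk
            have eR : subst (instSub targs) (subst (upN (S.arity T' c) (fun _ => Omega))
                (alts' c)) = subst σR (alts' c) := by
              rw [subst_subst]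
              refine subst_ext (fun k => ?_) _
              by_cases hk : k < S.arity T' c
              · rw [show upN (S.arity T' c) (fun _ => Omega) k = Exp.var k from if_pos hk,
                  σRpos k hk]
                exact dif_pos hk
              · rw [show upN (S.arity T' c) (fun _ => Omega) k =
                    rename (· + S.arity T' c) Omega from if_neg hk,
                  rename_closed Omega_closed, subst_closed Omega_closed, σRneg k hk]
            have hσpt : ∀ k, Howe (σL k) (σR k) := by
              intro k
              by_cases hk : k < S.arity T' c
              · rw [σLpos k hk, σRpos k hk]
                exact hHowArgs ⟨k, hk⟩
              · rw [σLneg k hk, σRneg k hk]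
                exact Howe_refl Omega_lfree
            have hHowRed : Howe (subst (instSub wargs) (alts c)) (subst σR (alts' c)) := by
              rw [eL]
              exact Howe_subst (h2 c) hσpt
            have hσLc : ∀ k, closed (σL k) := by
              intro k
              by_cases hk : k < S.arity T' c
              · rw [σLpos k hk]; exact hwargsc _
              · rw [σLneg k hk]; exact Omega_closed
            have hσRc : ∀ k, closed (σR k) := by
              intro k
              by_cases hk : k < S.arity T' c
              · rw [σRpos k hk]; exact htargsc _
              · rw [σRneg k hk]; exact Omega_closed
            have hσLl : ∀ k, lfree (σL k) := by
              intro k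
              by_cases hk : k < S.arity T' c
              · rw [σLpos k hk]; exact hwargsl _
              · rw [σLneg k hk]; exact Omega_lfree
            have hσRl : ∀ k, lfree (σR k) := by
              intro k
              by_cases hk : k < S.arity T' c
              · rw [σRpos k hk]; exact htargsl _
              · rw [σRneg k hk]; exact Omega_lfree
            have hredc : closed (subst (instSub wargs) (alts c)) := by
              rw [eL]
              exact closed_subst_all hσLc _
            have hredl : lfree (subst (instSub wargs) (alts c)) := by
              rw [eL]
              exact lfree_subst (hal.2 c) hσLl
            obtain ⟨w, hw, hrelv⟩ := ih m2 (by omega) hm2 hv hredc hredl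
              (closed_subst_all hσRc _) (lfree_subst (Howe_lfree_right (h2 c)) hσRl) hHowRed
            have hsim : simLcc (subst (fun _ => Omega) (Exp.caseE T' e' alts')) b := by
              have := hs (fun _ => Omega) (fun _ => Omega_lfree)
                (closed_subst_all (fun _ => Omega_closed) _)
                (by rw [subst_closed hbc]; exact hbc)
              rwa [subst_closed hbc] at this
            have hccw : lccConvTo (subst (fun _ => Omega) (Exp.caseE T' e' alts')) w := by
              refine ⟨?_, hw.2⟩
              show Relation.ReflTransGen lccStep
                (Exp.caseE T' (subst (fun _ => Omega) e')
                  (fun c0 => subst (upN (S.arity T' c0) (fun _ => Omega)) (alts' c0))) w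
              refine Relation.ReflTransGen.trans
                (rtg_plugA (.caseA T' .hole _) hw1b.1) ?_
              refine Relation.ReflTransGen.head ⟨.hole, _, _, LccBase.ncase, rfl, rfl⟩ ?_
              rw [eR]
              exact hw.1
            exact valRel_transfer hsim (closed_subst_all (fun _ => Omega_closed) _)
              (lfree_subst (e := Exp.caseE T' e' alts')
                ⟨Howe_lfree_right h1, fun c0 => Howe_lfree_right (h2 c0)⟩
                (fun _ => Omega_lfree)) hbc hbl hccw hrelv hv
          · refine absurd (stepN_atom_absurd (A := .hole) (Or.inr (Or.inr
              ⟨T, _, alts, rfl, hw1, ?_⟩)) hm1' hv) id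
            intro c0 args0 hh
            injection hh with hh1 _ _
            exact hT hh1

end Core

/-! ### Auxiliary development: soundness and the main theorem -/

namespace Core

variable {S : Sig}

theorem lfree_plugC {C : Ctx S} (hC : lfreeCtx C) {e : Exp S} (he : lfree e) :
    lfree (plugC C e) := by
  induction C with
  | hole => exact he
  | appL C t ih => exact ⟨ih hC.1, hC.2⟩
  | appR t C ih => exact ⟨hC.1, ih hC.2⟩
  | lamC C ih => exact ih hC
  | seqL C t ih => exact ⟨ih hC.1, hC.2⟩
  | seqR t C ih => exact ⟨hC.1, ih hC.2⟩
  | constrC T c i args C ih =>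
      intro j
      show lfree (Function.update args i (plugC C e) j)
      by_cases hj : j = i
      · subst hj
        rw [Function.update_self]
        exact ih hC.2
      · rw [Function.update_of_ne hj]
        exact hC.1 j
  | caseScrut T C alts ih => exact ⟨ih hC.1, fun c => hC.2 c⟩
  | caseAlt T c0 scrut alts C ih =>
      refine ⟨hC.1, fun c => ?_⟩
      show lfree (updAlt alts c0 (plugC C e) c)
      unfold updAlt
      by_cases hc : c = c0
      · rw [if_pos hc]
        exact ih hC.2.2
      · rw [if_neg hc]
        exact hC.2.1 c
  | letrecB n i b C t ih => exact hC.elim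
  | letrecT n b C ih => exact hC.elim

theorem Howe_plugC {C : Ctx S} (hC : lfreeCtx C) {s t : Exp S} (h : Howe s t)
    (hls : lfree s) (hlt : lfree t) : Howe (plugC C s) (plugC C t) := by
  induction C with
  | hole => exact h
  | appL C r ih =>
      exact Howe.app (ih hC.1) (Howe_refl hC.2) (openL_sim_refl _)
        ⟨lfree_plugC hC.1 hlt, hC.2⟩
  | appR r C ih =>
      exact Howe.app (Howe_refl hC.1) (ih hC.2) (openL_sim_refl _)
        ⟨hC.1, lfree_plugC hC.2 hlt⟩
  | lamC C ih =>
      exact Howe.lam (ih hC) (openL_sim_refl _) (lfree_plugC (C := .lamC C) hC hlt)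
  | seqL C r ih =>
      exact Howe.seqE (ih hC.1) (Howe_refl hC.2) (openL_sim_refl _)
        ⟨lfree_plugC hC.1 hlt, hC.2⟩
  | seqR r C ih =>
      exact Howe.seqE (Howe_refl hC.1) (ih hC.2) (openL_sim_refl _)
        ⟨hC.1, lfree_plugC hC.2 hlt⟩
  | constrC T c i args C ih =>
      refine Howe.constr (fun j => ?_) (openL_sim_refl _)
        (lfree_plugC (C := .constrC T c i args C) hC hlt)
      show Howe (Function.update args i (plugC C s) j) (Function.update args i (plugC C t) j)
      by_cases hj : j = i
      · subst hj
        rw [Function.update_self, Function.update_self]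
        exact ih hC.2
      · rw [Function.update_of_ne hj, Function.update_of_ne hj]
        exact Howe_refl (hC.1 j)
  | caseScrut T C alts ih =>
      exact Howe.caseE (ih hC.1) (fun c => Howe_refl (hC.2 c)) (openL_sim_refl _)
        ⟨lfree_plugC hC.1 hlt, fun c => hC.2 c⟩
  | caseAlt T c0 scrut alts C ih =>
      refine Howe.caseE (Howe_refl hC.1) (fun c => ?_) (openL_sim_refl _)
        (lfree_plugC (C := .caseAlt T c0 scrut alts C) hC hlt)
      show Howe (updAlt alts c0 (plugC C s) c) (updAlt alts c0 (plugC C t) c)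
      unfold updAlt
      by_cases hc : c = c0
      · rw [if_pos hc, if_pos hc]
        exact ih hC.2.2
      · rw [if_neg hc, if_neg hc]
        exact Howe_refl (hC.2.1 c)
  | letrecB n i b C r ih => exact hC.elim
  | letrecT n b C ih => exact hC.elim

/-- soundness: open applicative similarity is contained in the contextual preorder -/
theorem openL_sim_to_leLcc {s t : Exp S} (hls : lfree s) (hlt : lfree t)
    (h : openL simLcc s t) : leLcc s t := by
  intro C hC hconv
  have hH : Howe (plugC C s) (plugC C t) :=
    Howe_plugC hC (Howe_sim hls h hlt) hls hlt
  have hHc : Howe (subst (fun _ => Omega) (plugC C s))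
      (subst (fun _ => Omega) (plugC C t)) := Howe_subst hH Howe_omega_pt
  obtain ⟨v, hrtg, hv⟩ := conv_subst (fun _ => Omega) hconv
  obtain ⟨n, hn⟩ := rtg_stepN hrtg
  obtain ⟨w, hwconv, _⟩ := Howe_key n hn hv
    (closed_subst_all (fun _ => Omega_closed) _)
    (lfree_subst (lfree_plugC hC hls) (fun _ => Omega_lfree))
    (closed_subst_all (fun _ => Omega_closed) _)
    (lfree_subst (lfree_plugC hC hlt) (fun _ => Omega_lfree)) hHc
  exact conv_subst_reflect (lfree_plugC hC hlt) ⟨w, hwconv.1, hwconv.2⟩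

end Core

namespace Core

/-- In `L_lcc`, the open extension of applicative similarity coincides
with the contextual preorder, and consequently applicative bisimilarity coincides with
contextual equivalence. -/
theorem lcc_similarity_eq_contextual_preorder (S : Sig) :
    (∀ s t : Exp S, lfree s → lfree t → (openL simLcc s t ↔ leLcc s t)) ∧
    (∀ s t : Exp S, lfree s → lfree t →
      ((openL simLcc s t ∧ openL simLcc t s) ↔ eqLcc s t)) := by
  constructor
  · intro s t hls hlt
    exact ⟨fun h => openL_sim_to_leLcc hls hlt h, fun h => leLcc_to_openL_sim hls hlt h⟩
  · intro s t hls hlt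
    constructor
    · rintro ⟨h1, h2⟩
      exact ⟨openL_sim_to_leLcc hls hlt h1, openL_sim_to_leLcc hlt hls h2⟩
    · rintro ⟨h1, h2⟩
      exact ⟨leLcc_to_openL_sim hls hlt h1, leLcc_to_openL_sim hlt hls h2⟩

end Core
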